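/- arXiv:1709.06278 — 3 statements merged into one kernel-verified Lean document; each statement's English description precedes it below -/
import Mathlib

section
/- The function t ↦ P_u(t) = ∑_{i=1}^N (−1)^{i+1}·binom(N,i)·t/(θ_A(i)·t + θ_C(i)) is monotone nondecreasing on [0,1]. (This is the paper's Lemma 4/Lemma 5: under a given cached file set, the asymptotic upper bound of the area spectrum efficiency is an increasing function of each caching probability.) -/
open MeasureTheory Finset
open Function

/-- `θ_A(i) = 1 − 2∫_0^1 (iατ)u/(u^β+iατ) du`. -/
noncomputable def thetaA (β τ α : ℝ) (i : ℕ) : ℝ :=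
  1 - 2 * ∫ u in (0 : ℝ)..1, ((i : ℝ) * α * τ) * u / (u ^ β + (i : ℝ) * α * τ)

/-- `θ_C(i) = 2∫_0^∞ (iατ)u/(u^β+iατ) du`. -/
noncomputable def thetaC (β τ α : ℝ) (i : ℕ) : ℝ :=
  2 * ∫ u in Set.Ioi (0 : ℝ), ((i : ℝ) * α * τ) * u / (u ^ β + (i : ℝ) * α * τ)

/-- The upper-bound successful transmission probability of a cached file stored with caching
probability `t`: `P_u(t) = ∑_{i=1}^N (−1)^{i+1}·binom(N,i)·t/(θ_A(i)·t + θ_C(i))`. -/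
noncomputable def Pu (β τ α : ℝ) (N : ℕ) (t : ℝ) : ℝ :=
  ∑ i ∈ Finset.Icc 1 N,
    (-1 : ℝ) ^ (i + 1) * (N.choose i : ℝ) * t / (thetaA β τ α i * t + thetaC β τ α i)

noncomputable section AuxDD

/-- forward difference on real sequences -/
def dd (f : ℕ → ℝ) : ℕ → ℝ := fun n => f (n + 1) - f n

lemma dd_eq_fwdDiff : dd = fwdDiff (1 : ℕ) (G := ℝ) := rfl

lemma dd_apply (f : ℕ → ℝ) (n : ℕ) : dd f n = f (n + 1) - f n := rfl

lemma dd_iter_eq_sum (f : ℕ → ℝ) (n y : ℕ) :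
    dd^[n] f y = ∑ k ∈ Finset.range (n + 1), (-1 : ℝ) ^ (n - k) * (n.choose k : ℝ) * f (y + k) := by
  rw [dd_eq_fwdDiff]
  rw [fwdDiff_iter_eq_sum_shift]
  refine Finset.sum_congr rfl fun k _ => ?_
  push_cast [zsmul_eq_mul, smul_eq_mul]
  ring_nf

lemma dd_iter_succ_inner (f : ℕ → ℝ) (k : ℕ) : dd^[k+1] f = dd^[k] (dd f) :=
  Function.iterate_succ_apply dd k f

lemma dd_iter_succ_outer (f : ℕ → ℝ) (k : ℕ) : dd^[k+1] f = dd (dd^[k] f) :=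
  Function.iterate_succ_apply' dd k f

lemma dd_congr {f g : ℕ → ℝ} (h : ∀ n, f n = g n) : dd f = dd g := by
  have : f = g := funext h
  rw [this]

lemma dd_iter_add (f g : ℕ → ℝ) (k m : ℕ) :
    dd^[k] (fun n => f n + g n) m = dd^[k] f m + dd^[k] g m := by
  induction k generalizing f g with
  | zero => simp
  | succ k ih =>
    rw [dd_iter_succ_inner, dd_iter_succ_inner, dd_iter_succ_inner]
    rw [show dd (fun n => f n + g n) = fun n => dd f n + dd g n from funext fun n => by
      simp [dd_apply]; ring]
    exact ih _ _

lemma dd_iter_neg (f : ℕ → ℝ) (k m : ℕ) :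
    dd^[k] (fun n => -f n) m = -dd^[k] f m := by
  induction k generalizing f with
  | zero => simp
  | succ k ih =>
    rw [dd_iter_succ_inner, dd_iter_succ_inner]
    rw [show dd (fun n => -f n) = fun n => -(dd f n) from funext fun n => by
      simp [dd_apply]; ring]
    exact ih _

lemma dd_iter_const_mul (c : ℝ) (f : ℕ → ℝ) (k m : ℕ) :
    dd^[k] (fun n => c * f n) m = c * dd^[k] f m := by
  induction k generalizing f with
  | zero => simp
  | succ k ih =>
    rw [dd_iter_succ_inner, dd_iter_succ_inner]
    rw [show dd (fun n => c * f n) = fun n => c * (dd f n) from funext fun n => by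
      simp [dd_apply]; ring]
    exact ih _

lemma dd_iter_shift (f : ℕ → ℝ) (k m : ℕ) :
    dd^[k] (fun n => f (n + 1)) m = dd^[k] f (m + 1) := by
  induction k generalizing f with
  | zero => simp
  | succ k ih =>
    rw [dd_iter_succ_inner, dd_iter_succ_inner]
    rw [show dd (fun n => f (n + 1)) = fun n => (dd f) (n + 1) from rfl]
    exact ih _

/-- `dd` of a product. -/
lemma dd_mul (f g : ℕ → ℝ) (n : ℕ) :
    dd (fun m => f m * g m) n = f n * dd g n + dd f n * g (n + 1) := by
  simp [dd_apply]; ring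

/-- Completely monotone sequence of order `≤ n`. -/
def CMn (n : ℕ) (f : ℕ → ℝ) : Prop := ∀ k ≤ n, ∀ m, 0 ≤ (-1 : ℝ) ^ k * dd^[k] f m

/-- Completely monotone sequence (all orders). -/
def CMseq (f : ℕ → ℝ) : Prop := ∀ k m, 0 ≤ (-1 : ℝ) ^ k * dd^[k] f m

lemma CMseq.cmn {f : ℕ → ℝ} (h : CMseq f) (n : ℕ) : CMn n f := fun k _ m => h k m

lemma CMn.mono {f : ℕ → ℝ} {n k : ℕ} (h : CMn n f) (hk : k ≤ n) : CMn k f :=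
  fun j hj m => h j (hj.trans hk) m

lemma CMn.shift {f : ℕ → ℝ} {n : ℕ} (h : CMn n f) : CMn n (fun m => f (m + 1)) := by
  intro k hk m
  rw [dd_iter_shift]
  exact h k hk (m + 1)

lemma CMn.neg_dd {f : ℕ → ℝ} {n : ℕ} (h : CMn (n + 1) f) : CMn n (fun m => -(dd f m)) := by
  intro k hk m
  rw [dd_iter_neg]
  have := h (k + 1) (Nat.succ_le_succ hk) m
  rw [dd_iter_succ_inner] at this
  calc (0:ℝ) ≤ (-1) ^ (k+1) * dd^[k] (dd f) m := this
    _ = (-1) ^ k * -dd^[k] (dd f) m := by ring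

lemma CMn.nonneg {f : ℕ → ℝ} {n : ℕ} (h : CMn n f) (m : ℕ) : 0 ≤ f m := by
  have := h 0 (Nat.zero_le n) m
  simpa using this

lemma CMn.mul {n : ℕ} : ∀ {f g : ℕ → ℝ}, CMn n f → CMn n g →
    CMn n (fun m => f m * g m) := by
  induction n with
  | zero =>
    intro f g hf hg k hk m
    interval_cases k
    simpa using mul_nonneg (hf.nonneg m) (hg.nonneg m)
  | succ n ih =>
    intro f g hf hg k hk m
    rcases k with _ | k
    · simpa using mul_nonneg (hf.nonneg m) (hg.nonneg m)
    · rw [dd_iter_succ_inner]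
      rw [show (dd fun m => f m * g m) =
        (fun n_1 => -(f n_1 * -(dd g n_1)) + -((-(dd f n_1)) * g (n_1 + 1))) from
        funext fun x => by rw [dd_mul]; ring]
      rw [dd_iter_add, dd_iter_neg, dd_iter_neg]
      have h2 := ih (hf.mono (Nat.le_succ n)) hg.neg_dd k (by omega) m
      have h3 := ih hf.neg_dd ((hg.mono (Nat.le_succ n)).shift) k (by omega) m
      have e : (-1:ℝ)^(k+1) * (-dd^[k] (fun n_1 => f n_1 * -dd g n_1) m
          + -dd^[k] (fun n_1 => -dd f n_1 * g (n_1 + 1)) m)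
          = (-1)^k * dd^[k] (fun n_1 => f n_1 * -dd g n_1) m
          + (-1)^k * dd^[k] (fun n_1 => -dd f n_1 * g (n_1 + 1)) m := by
        rw [pow_succ]; ring
      rw [e]
      exact add_nonneg h2 h3

lemma CMseq.mul {f g : ℕ → ℝ} (hf : CMseq f) (hg : CMseq g) :
    CMseq (fun m => f m * g m) := fun k m => CMn.mul (hf.cmn k) (hg.cmn k) k le_rfl m

end AuxDD

section AuxDD2

/-- Inverse of a positive Bernstein sequence is completely monotone. -/
lemma cmn_inv : ∀ (n : ℕ) (E : ℕ → ℝ), (∀ m, 0 < E m) → CMseq (dd E) →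
    CMn n (fun m => (E m)⁻¹) := by
  intro n
  induction n using Nat.strong_induction_on with
  | _ n ih =>
    intro E hE hdd k hk m
    rcases k with _ | k
    · simpa using (inv_nonneg.2 (hE m).le)
    · rcases n with _ | n
      · omega
      rw [dd_iter_succ_inner]
      have hdi : dd (fun m => (E m)⁻¹) = fun m => -(dd E m * ((E m)⁻¹ * (E (m+1))⁻¹)) := by
        funext m
        have h1 : E m ≠ 0 := (hE m).ne'
        have h2 : E (m+1) ≠ 0 := (hE (m+1)).ne'
        simp only [dd_apply]
        rw [inv_sub_inv h2 h1, div_eq_mul_inv, mul_inv]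
        ring
      rw [hdi]
      rw [show (fun m => -(dd E m * ((E m)⁻¹ * (E (m+1))⁻¹)))
          = (fun m => -((fun j => dd E j * ((E j)⁻¹ * (E (j+1))⁻¹)) m)) from rfl]
      rw [dd_iter_neg]
      have hinv : CMn n (fun m => (E m)⁻¹) := ih n (by omega) E hE hdd
      have hinvs : CMn n (fun m => (E (m+1))⁻¹) := hinv.shift
      have hprod : CMn n (fun j => dd E j * ((E j)⁻¹ * (E (j+1))⁻¹)) :=
        CMn.mul (hdd.cmn n) (CMn.mul hinv hinvs)
      have h5 := hprod k (by omega) m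
      have e : (-1:ℝ)^(k+1) * -dd^[k] (fun j => dd E j * ((E j)⁻¹ * (E (j+1))⁻¹)) m
          = (-1)^k * dd^[k] (fun j => dd E j * ((E j)⁻¹ * (E (j+1))⁻¹)) m := by
        rw [pow_succ]; ring
      rw [e]
      exact h5

lemma CMseq.inv {E : ℕ → ℝ} (hE : ∀ m, 0 < E m) (hdd : CMseq (dd E)) :
    CMseq (fun m => (E m)⁻¹) := fun k m => cmn_inv k E hE hdd k le_rfl m

/-- `(-1)^k dd^[k] f m ≤ f m` for a CM sequence. -/
lemma CMseq.diff_le {f : ℕ → ℝ} (hf : CMseq f) (k m : ℕ) :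
    (-1:ℝ)^k * dd^[k] f m ≤ f m := by
  induction k generalizing m with
  | zero => simp
  | succ k ih =>
    have h1 : dd^[k+1] f m = dd^[k] f (m+1) - dd^[k] f m := by
      rw [dd_iter_succ_outer]; rfl
    have h2 := hf k (m+1)
    have e : (-1:ℝ)^(k+1) * dd^[k+1] f m
        = (-1)^k * dd^[k] f m - (-1)^k * dd^[k] f (m+1) := by
      rw [h1, pow_succ]; ring
    calc (-1:ℝ)^(k+1) * dd^[k+1] f m ≤ (-1)^k * dd^[k] f m := by rw [e]; linarith
      _ ≤ f m := ih m

/-- key positivity of the product with a Bernstein sequence vanishing at 0. -/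
lemma eps_mul_sign (N : ℕ) : ∀ (E G : ℕ → ℝ), E 0 = 0 → CMseq (dd E) → CMseq G →
    0 ≤ (-1:ℝ)^(N+1) * dd^[N] (fun m => E m * G m) 0 := by
  induction N with
  | zero =>
    intro E G hE0 _ _
    simp [hE0]
  | succ N ih =>
    intro E G hE0 hE hG
    rw [dd_iter_succ_inner]
    rw [show (dd fun m => E m * G m) =
        (fun j => -(E j * -dd G j) + dd E j * G (j + 1)) from
      funext fun x => by rw [dd_mul]; ring]
    rw [dd_iter_add]
    rw [show (fun j => -(E j * -dd G j)) = (fun j => -((fun i => E i * -dd G i) j)) from rfl]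
    rw [dd_iter_neg]
    have hnegddG : CMseq (fun j => -dd G j) := by
      intro k m
      rw [show (fun j => -dd G j) = (fun j => -((dd G) j)) from rfl, dd_iter_neg,
        show (-1:ℝ)^k * -dd^[k] (dd G) m = (-1)^(k+1) * dd^[k+1] G m by
          rw [dd_iter_succ_inner, pow_succ]; ring]
      exact hG (k+1) m
    have hterm1 : 0 ≤ (-1:ℝ)^(N+1) * dd^[N] (fun i => E i * -dd G i) 0 :=
      ih E (fun j => -dd G j) hE0 hE hnegddG
    have hterm2 : 0 ≤ (-1:ℝ)^N * dd^[N] (fun j => dd E j * G (j + 1)) 0 := by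
      have : CMseq (fun j => dd E j * G (j + 1)) :=
        CMseq.mul hE (fun k m => by rw [dd_iter_shift]; exact hG k (m+1))
      exact this N 0
    have e : (-1:ℝ)^(N+1+1) * (-dd^[N] (fun i => E i * -dd G i) 0
        + dd^[N] (fun j => dd E j * G (j + 1)) 0)
        = (-1)^(N+1) * dd^[N] (fun i => E i * -dd G i) 0
        + (-1)^N * dd^[N] (fun j => dd E j * G (j + 1)) 0 := by
      rw [pow_succ, pow_succ]; ring
    rw [e]
    exact add_nonneg hterm1 hterm2

end AuxDD2

section AuxSum

lemma sum_Icc_eq (f : ℕ → ℝ) (N : ℕ) :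
    ∑ i ∈ Finset.Icc 1 N, (-1:ℝ)^(i+1) * (N.choose i : ℝ) * f i
      = f 0 - (-1:ℝ)^N * dd^[N] f 0 := by
  have h1 : (-1:ℝ)^N * dd^[N] f 0
      = ∑ k ∈ Finset.range (N+1), (-1:ℝ)^k * (N.choose k : ℝ) * f k := by
    rw [dd_iter_eq_sum, Finset.mul_sum]
    refine Finset.sum_congr rfl fun k hk => ?_
    have hk' : k ≤ N := Nat.lt_succ_iff.mp (Finset.mem_range.mp hk)
    have e1 : (-1:ℝ)^(N-k) * (-1)^k = (-1)^N := by rw [← pow_add, Nat.sub_add_cancel hk']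
    have e2 : (-1:ℝ)^(N-k) * (-1)^(N-k) = 1 := by
      rw [← pow_add]; exact Even.neg_one_pow ⟨N-k, rfl⟩
    have e3 : (-1:ℝ)^N * (-1:ℝ)^(N-k) = (-1)^k := by
      calc (-1:ℝ)^N * (-1)^(N-k) = ((-1)^(N-k) * (-1)^k) * (-1)^(N-k) := by rw [e1]
        _ = ((-1)^(N-k) * (-1)^(N-k)) * (-1)^k := by ring
        _ = (-1)^k := by rw [e2]; ring
    rw [Nat.zero_add]
    calc (-1:ℝ)^N * ((-1)^(N-k) * (N.choose k : ℝ) * f k)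
        = ((-1)^N * (-1)^(N-k)) * (N.choose k : ℝ) * f k := by ring
      _ = (-1)^k * (N.choose k : ℝ) * f k := by rw [e3]
  have h2 : ∑ k ∈ Finset.range (N+1), (-1:ℝ)^k * (N.choose k : ℝ) * f k
      = f 0 + ∑ i ∈ Finset.Icc 1 N, (-1:ℝ)^i * (N.choose i : ℝ) * f i := by
    rw [Finset.sum_range_succ']
    simp only [pow_zero, one_mul, Nat.choose_zero_right, Nat.cast_one]
    rw [add_comm]
    congr 1
    rw [show Finset.Icc 1 N = Finset.Ico 1 (N+1) from (Finset.Ico_add_one_right_eq_Icc 1 N).symm,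
      Finset.sum_Ico_eq_sum_range]
    simp only [Nat.add_sub_cancel]
    refine Finset.sum_congr rfl fun i _ => ?_
    rw [add_comm 1 i]
  have h3 : ∑ i ∈ Finset.Icc 1 N, (-1:ℝ)^(i+1) * (N.choose i : ℝ) * f i
      = -∑ i ∈ Finset.Icc 1 N, (-1:ℝ)^i * (N.choose i : ℝ) * f i := by
    rw [← Finset.sum_neg_distrib]
    exact Finset.sum_congr rfl fun i _ => by rw [pow_succ]; ring
  linarith

end AuxSum

section AuxAnalytic

open Set

lemma dd_iter_integral (μ : Measure ℝ) (f : ℕ → ℝ → ℝ) (hf : ∀ n, Integrable (f n) μ) :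
    ∀ (k m : ℕ), dd^[k] (fun n => ∫ u, f n u ∂μ) m = ∫ u, dd^[k] (fun n => f n u) m ∂μ := by
  intro k
  induction k generalizing f with
  | zero => intro m; simp
  | succ k ih =>
    intro m
    rw [dd_iter_succ_inner]
    rw [show dd (fun n => ∫ u, f n u ∂μ) = (fun n => ∫ u, (f (n+1) u - f n u) ∂μ) from
      funext fun n => by rw [dd_apply, integral_sub (hf (n+1)) (hf n)]]
    rw [ih (fun n u => f (n+1) u - f n u) (fun n => (hf (n+1)).sub (hf n)) m]
    refine integral_congr_ae (Filter.Eventually.of_forall fun u => ?_)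
    show dd^[k] (fun n => f (n + 1) u - f n u) m = dd^[k+1] (fun n => f n u) m
    rw [dd_iter_succ_inner]
    rfl

lemma dd_succ_linear (c₀ c₁ c₂ : ℝ) (f h : ℕ → ℝ) (k m : ℕ) :
    dd^[k+1] (fun n => c₀ + c₁ * f n + c₂ * h n) m
      = c₁ * dd^[k+1] f m + c₂ * dd^[k+1] h m := by
  rw [dd_iter_succ_inner]
  rw [show dd (fun n => c₀ + c₁ * f n + c₂ * h n)
      = (fun n => (fun j => c₁ * dd f j) n + (fun j => c₂ * dd h j) n) from
    funext fun n => by simp only [dd_apply]; ring]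
  rw [dd_iter_add, dd_iter_const_mul, dd_iter_const_mul, ← dd_iter_succ_inner,
    ← dd_iter_succ_inner]

lemma dd_inv_linear (A b : ℝ) (hA : 0 < A) (hb : 0 < b) :
    ∀ (k m : ℕ), dd^[k] (fun n : ℕ => (A + (n:ℝ)*b)⁻¹) m
      = (-1:ℝ)^k * (k.factorial : ℝ) * b^k
          * ∏ j ∈ Finset.range (k+1), (A + ((m:ℝ)+(j:ℝ))*b)⁻¹ := by
  have hpos : ∀ x:ℝ, 0 ≤ x → 0 < A + x*b := fun x hx => by nlinarith
  intro k
  induction k with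
  | zero =>
    intro m
    simp
  | succ k ih =>
    intro m
    rw [dd_iter_succ_outer, dd_apply, ih (m+1), ih m]
    have e1 : ∏ j ∈ Finset.range (k+1), (A + (((m+1:ℕ):ℝ))*b + (j:ℝ)*b)⁻¹
        = (∏ j ∈ Finset.range k, (A + ((m:ℝ)+1+(j:ℝ))*b)⁻¹) * (A + ((m:ℝ)+1+(k:ℝ))*b)⁻¹ := by
      rw [Finset.prod_range_succ]
      congr 1
      · refine Finset.prod_congr rfl fun j _ => ?_
        push_cast
        ring_nf
      · push_cast
        ring_nf
    have e0 : ∀ (m' : ℕ), ∏ j ∈ Finset.range (k+1), (A + ((m':ℝ)+(j:ℝ))*b)⁻¹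
        = ∏ j ∈ Finset.range (k+1), (A + ((m':ℕ):ℝ)*b + (j:ℝ)*b)⁻¹ := by
      intro m'
      refine Finset.prod_congr rfl fun j _ => ?_
      ring_nf
    have e2 : ∏ j ∈ Finset.range (k+1), (A + ((m:ℝ)+(j:ℝ))*b)⁻¹
        = (∏ j ∈ Finset.range k, (A + ((m:ℝ)+1+(j:ℝ))*b)⁻¹) * (A + (m:ℝ)*b)⁻¹ := by
      rw [Finset.prod_range_succ']
      congr 1
      · refine Finset.prod_congr rfl fun j _ => ?_
        push_cast
        ring_nf
      · push_cast
        ring_nf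
    have e3 : ∏ j ∈ Finset.range (k+2), (A + ((m:ℝ)+(j:ℝ))*b)⁻¹
        = ((∏ j ∈ Finset.range k, (A + ((m:ℝ)+1+(j:ℝ))*b)⁻¹) * (A + ((m:ℝ)+1+(k:ℝ))*b)⁻¹)
            * (A + (m:ℝ)*b)⁻¹ := by
      rw [Finset.prod_range_succ', Finset.prod_range_succ]
      congr 1
      · congr 1
        · refine Finset.prod_congr rfl fun j _ => ?_
          push_cast
          ring_nf
        · push_cast
          ring_nf
      · push_cast
        ring_nf
    rw [e0 (m+1), e1, e2, e3]
    have hx : (0:ℝ) < A + ((m:ℝ)+1+(k:ℝ))*b := hpos _ (by positivity)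
    have hy : (0:ℝ) < A + (m:ℝ)*b := hpos _ (by positivity)
    have key : (A + ((m:ℝ)+1+(k:ℝ))*b)⁻¹ - (A + (m:ℝ)*b)⁻¹
        = (-(((k:ℝ)+1)*b)) * ((A + ((m:ℝ)+1+(k:ℝ))*b)⁻¹ * (A + (m:ℝ)*b)⁻¹) := by
      rw [inv_sub_inv hx.ne' hy.ne', div_eq_mul_inv, mul_inv]
      ring
    set P := ∏ j ∈ Finset.range k, (A + ((m:ℝ)+1+(j:ℝ))*b)⁻¹
    have hfac : ((k+1).factorial : ℝ) = ((k:ℝ)+1) * (k.factorial : ℝ) := by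
      rw [Nat.factorial_succ]; push_cast; ring
    rw [hfac]
    linear_combination ((-1:ℝ)^k * (k.factorial : ℝ) * b^k * P) * key

end AuxAnalytic

section AuxAnalytic2

open Set Real

lemma integrableOn_gc (β c : ℝ) (hβ : 2 < β) (hc : 0 ≤ c) :
    IntegrableOn (fun u => c*u/(u^β + c)) (Set.Ioi (0:ℝ)) := by
  rcases eq_or_lt_of_le hc with hc0 | hc0
  · have : (fun u : ℝ => c*u/(u^β + c)) = fun u => 0*u/(u^β+0) := by rw [← hc0]
    rw [this]
    simp only [zero_mul, zero_div]
    exact integrableOn_zero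
  · have hcont : ContinuousOn (fun u : ℝ => c*u/(u^β + c)) (Set.Ioi 0) := by
      apply ContinuousOn.div
      · exact (continuous_const.mul continuous_id).continuousOn
      · exact (ContinuousOn.rpow_const continuousOn_id
          (fun x hx => Or.inl (ne_of_gt hx))).add continuousOn_const
      · intro x hx
        have : (0:ℝ) < x^β := Real.rpow_pos_of_pos hx β
        positivity
    have h1 : IntegrableOn (fun u => c*u/(u^β + c)) (Set.Ioc 0 1) := by
      have hcont1 : ContinuousOn (fun u : ℝ => c*u/(u^β + c)) (Set.Icc 0 1) := by
        apply ContinuousOn.div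
        · exact (continuous_const.mul continuous_id).continuousOn
        · exact (ContinuousOn.rpow_const continuousOn_id
            (fun x _ => Or.inr (by linarith))).add continuousOn_const
        · intro x hx
          have hxb : (0:ℝ) ≤ x^β := Real.rpow_nonneg hx.1 β
          positivity
      exact (hcont1.integrableOn_Icc).mono_set Set.Ioc_subset_Icc_self
    have h2 : IntegrableOn (fun u => c*u/(u^β + c)) (Set.Ioi 1) := by
      have hbase : IntegrableOn (fun u : ℝ => c * u^(1-β)) (Set.Ioi 1) :=
        (integrableOn_Ioi_rpow_of_lt (by linarith) one_pos).const_mul c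
      refine Integrable.mono' hbase
        ((hcont.mono (fun x hx => Set.mem_Ioi.2 (lt_trans zero_lt_one hx))).aestronglyMeasurable
          measurableSet_Ioi) ?_
      refine (ae_restrict_iff' measurableSet_Ioi).2 (Filter.Eventually.of_forall fun x hx => ?_)
      have hx1 : (1:ℝ) < x := hx
      have hx0 : (0:ℝ) < x := lt_trans one_pos hx1
      have hxb : (0:ℝ) < x^β := Real.rpow_pos_of_pos hx0 β
      have hge : 0 ≤ c*x/(x^β + c) := by positivity
      rw [Real.norm_of_nonneg hge]
      have e : c * x^(1-β) = c*x/x^β := by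
        rw [Real.rpow_sub hx0, Real.rpow_one, mul_div_assoc]
      rw [e, div_le_div_iff₀ (by positivity) (by positivity)]
      nlinarith [mul_pos (mul_pos hc0 hx0) hc0]
    rw [show Set.Ioi (0:ℝ) = Set.Ioc 0 1 ∪ Set.Ioi 1 from (Set.Ioc_union_Ioi_eq_Ioi zero_le_one).symm]
    exact h1.union h2

lemma gc_nonneg (β c u : ℝ) (hu : 0 < u) (hc : 0 ≤ c) : 0 ≤ c*u/(u^β + c) := by
  have : (0:ℝ) < u^β := Real.rpow_pos_of_pos hu β
  positivity

/-- sign of the iterated difference of the integrand, for `u > 0`. -/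
lemma dd_g_sign (β α τ u : ℝ) (hu : 0 < u) (hb : 0 < α*τ) (k m : ℕ) :
    0 ≤ (-1:ℝ)^k * dd^[k+1] (fun n : ℕ => ((n:ℝ)*α*τ)*u/(u^β + (n:ℝ)*α*τ)) m := by
  have hA : 0 < u^β := Real.rpow_pos_of_pos hu β
  have hfun : (fun n : ℕ => ((n:ℝ)*α*τ)*u/(u^β + (n:ℝ)*α*τ))
      = fun n : ℕ => u + (-(u*u^β)) * (fun j : ℕ => (u^β + (j:ℝ)*(α*τ))⁻¹) n
          + 0 * (fun j : ℕ => (0:ℝ)) n := by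
    funext n
    have hd : (0:ℝ) < u^β + (n:ℝ)*(α*τ) := by
      have : (0:ℝ) ≤ (n:ℝ)*(α*τ) := by positivity
      linarith
    have h2 : ((n:ℝ)*α*τ) = (n:ℝ)*(α*τ) := by ring
    simp only
    rw [h2]
    have hd2 : (n:ℝ) * α * τ + u ^ β ≠ 0 := by rw [h2]; linarith
    field_simp
    linear_combination u * mul_inv_cancel₀ hd2
  rw [hfun, dd_succ_linear]
  rw [dd_inv_linear (u^β) (α*τ) hA hb (k+1) m]
  have hprod : (0:ℝ) ≤ ∏ j ∈ Finset.range (k+1+1), (u^β + ((m:ℝ)+(j:ℝ))*(α*τ))⁻¹ := by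
    refine Finset.prod_nonneg fun j _ => ?_
    have : (0:ℝ) ≤ ((m:ℝ)+(j:ℝ))*(α*τ) := by positivity
    positivity
  have hsgn : (-1:ℝ)^k * (-1:ℝ)^(k+1) = -1 := by
    rw [← pow_add]
    exact Odd.neg_one_pow ⟨k, by ring⟩
  have hz : dd^[k+1] (fun j : ℕ => (0:ℝ)) m = 0 := by
    have : (fun j : ℕ => (0:ℝ)) = fun j : ℕ => (0:ℝ) + (0:ℝ) * (fun _ : ℕ => (0:ℝ)) j
        + 0 * (fun _ : ℕ => (0:ℝ)) j := by funext; simp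
    calc dd^[k+1] (fun j : ℕ => (0:ℝ)) m
        = 0 * dd^[k+1] (fun _ : ℕ => (0:ℝ)) m + 0 * dd^[k+1] (fun _ : ℕ => (0:ℝ)) m := by
          rw [← dd_succ_linear 0 0 0]; exact congrFun (congrArg _ this) m
      _ = 0 := by ring
  rw [hz]
  set Q := ∏ j ∈ Finset.range (k+1+1), (u^β + ((m:ℝ)+(j:ℝ))*(α*τ))⁻¹ with hQ
  have e : (-1:ℝ)^k * (-(u*u^β) * ((-1:ℝ)^(k+1) * ((k+1).factorial : ℝ) * (α*τ)^(k+1) * Q) + 0*0)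
      = (u*u^β) * (((k+1).factorial : ℝ) * (α*τ)^(k+1) * Q) := by
    rw [show (-1:ℝ)^k * (-(u*u^β) * ((-1:ℝ)^(k+1) * ((k+1).factorial : ℝ) * (α*τ)^(k+1) * Q) + 0*0)
        = ((-1:ℝ)^k * (-1:ℝ)^(k+1)) * (-(u*u^β)) * (((k+1).factorial : ℝ) * (α*τ)^(k+1) * Q)
      from by ring, hsgn]
    ring
  rw [e]
  have : (0:ℝ) ≤ ((k+1).factorial : ℝ) * (α*τ)^(k+1) * Q := by positivity
  positivity

end AuxAnalytic2

open Set

/-- **The paper's Lemma 4/Lemma 5**: with `α = (N!)^{−1/N}`, the upper-bound STP of a cached file,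
`t ↦ P_u(t)`, is monotone nondecreasing on `[0,1]`. -/
theorem Pu_monotoneOn (β τ : ℝ) (hβ : 2 < β) (hτ : 0 < τ) (N : ℕ) (hN : 1 ≤ N)
    (α : ℝ) (hα : α = (N.factorial : ℝ) ^ (-(1 : ℝ) / (N : ℝ))) :
    MonotoneOn (Pu β τ α N) (Set.Icc 0 1) := by
  have hα0 : 0 < α := by
    rw [hα]; exact Real.rpow_pos_of_pos (by exact_mod_cast N.factorial_pos) _
  have hb : 0 < α * τ := mul_pos hα0 hτ
  set g : ℕ → ℝ → ℝ := fun n u => ((n:ℝ)*α*τ)*u/(u^β + (n:ℝ)*α*τ) with hgdef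
  have hgint : ∀ n, IntegrableOn (g n) (Set.Ioi 0) := by
    intro n
    exact integrableOn_gc β ((n:ℝ)*α*τ) hβ (by positivity)
  have hgint1 : ∀ n, IntegrableOn (g n) (Set.Ioc 0 1) :=
    fun n => (hgint n).mono_set Set.Ioc_subset_Ioi_self
  have hgint2 : ∀ n, IntegrableOn (g n) (Set.Ioi 1) :=
    fun n => (hgint n).mono_set (fun x hx => Set.mem_Ioi.2 (lt_trans one_pos hx))
  set J1 : ℕ → ℝ := fun n => ∫ u in Set.Ioc (0:ℝ) 1, g n u with hJ1def
  set J2 : ℕ → ℝ := fun n => ∫ u in Set.Ioi (1:ℝ), g n u with hJ2def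
  have hθA : ∀ n, thetaA β τ α n = 1 - 2 * J1 n := by
    intro n
    unfold thetaA
    rw [intervalIntegral.integral_of_le zero_le_one]
  have hθC : ∀ n, thetaC β τ α n = 2 * (J1 n + J2 n) := by
    intro n
    unfold thetaC
    rw [show Set.Ioi (0:ℝ) = Set.Ioc 0 1 ∪ Set.Ioi 1 from
      (Set.Ioc_union_Ioi_eq_Ioi zero_le_one).symm]
    rw [setIntegral_union (Set.Ioc_disjoint_Ioi le_rfl) measurableSet_Ioi
      (hgint1 n) (hgint2 n)]
  have hJ1nn : ∀ n, 0 ≤ J1 n := fun n => setIntegral_nonneg measurableSet_Ioc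
    (fun u hu => gc_nonneg β _ u hu.1 (by positivity))
  have hJ2nn : ∀ n, 0 ≤ J2 n := fun n => setIntegral_nonneg measurableSet_Ioi
    (fun u hu => gc_nonneg β _ u (lt_trans one_pos hu) (by positivity))
  have hJsign : ∀ (J : ℕ → ℝ) (S : Set ℝ), MeasurableSet S → S ⊆ Set.Ioi 0 →
      (∀ n, IntegrableOn (g n) S) → (J = fun n => ∫ u in S, g n u) →
      ∀ k m, 0 ≤ (-1:ℝ)^k * dd^[k+1] J m := by
    intro J S hS hsub hint hJeq k m
    rw [hJeq]
    rw [dd_iter_integral (volume.restrict S) g hint (k+1) m]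
    rw [← integral_const_mul]
    refine setIntegral_nonneg hS fun u hu => ?_
    exact dd_g_sign β α τ u (hsub hu) hb k m
  set D : ℝ → ℕ → ℝ := fun s n => 1 + 2*(s-1) * J1 n + 2*s * J2 n with hDdef
  have hDpos : ∀ s, 1 ≤ s → ∀ n, 0 < D s n := by
    intro s hs n
    have h1 := hJ1nn n; have h2 := hJ2nn n
    simp only [hDdef]
    nlinarith
  have hDid : ∀ s n, thetaA β τ α n + s * thetaC β τ α n = D s n := by
    intro s n; rw [hθA n, hθC n]; simp only [hDdef]; ring
  have hddD : ∀ s, 1 ≤ s → CMseq (dd (D s)) := by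
    intro s hs k m
    rw [← dd_iter_succ_inner]
    rw [show D s = (fun n => 1 + (2*(s-1)) * J1 n + (2*s) * J2 n) from by
      funext n; simp only [hDdef]]
    rw [dd_succ_linear]
    have t1 := hJsign J1 (Set.Ioc 0 1) measurableSet_Ioc (fun u hu => hu.1) hgint1 hJ1def k m
    have t2 := hJsign J2 (Set.Ioi 1) measurableSet_Ioi
      (fun u hu => Set.mem_Ioi.2 (lt_trans one_pos hu)) hgint2 hJ2def k m
    have e : (-1:ℝ)^k * ((2*(s-1)) * dd^[k+1] J1 m + (2*s) * dd^[k+1] J2 m)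
        = (2*(s-1)) * ((-1:ℝ)^k * dd^[k+1] J1 m) + (2*s) * ((-1:ℝ)^k * dd^[k+1] J2 m) := by
      ring
    rw [e]
    exact add_nonneg (mul_nonneg (by linarith) t1) (mul_nonneg (by linarith) t2)
  have hF : ∀ s (hs : 1 ≤ s), CMseq (fun n => (D s n)⁻¹) :=
    fun s hs => CMseq.inv (hDpos s hs) (hddD s hs)
  have hPu : ∀ t, 0 < t → t ≤ 1 → Pu β τ α N t
      = ∑ i ∈ Finset.Icc 1 N, (-1:ℝ)^(i+1) * (N.choose i : ℝ) * (D t⁻¹ i)⁻¹ := by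
    intro t ht0 ht1
    have hs : 1 ≤ t⁻¹ := (one_le_inv₀ ht0).2 ht1
    unfold Pu
    refine Finset.sum_congr rfl fun i _ => ?_
    have hDpos' := hDpos t⁻¹ hs i
    have hden : thetaA β τ α i * t + thetaC β τ α i = t * D t⁻¹ i := by
      rw [← hDid t⁻¹ i]
      field_simp
    rw [hden, mul_div_assoc]
    congr 1
    rw [mul_comm t (D t⁻¹ i), div_mul_eq_div_div_swap, div_self ht0.ne', one_div]
  have hPu0 : Pu β τ α N 0 = 0 := by
    unfold Pu
    refine Finset.sum_eq_zero fun i _ => ?_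
    rw [mul_zero, zero_div]
  intro t₁ ht₁ t₂ ht₂ h₁₂
  obtain ⟨ht₁0, ht₁1⟩ := ht₁
  obtain ⟨ht₂0, ht₂1⟩ := ht₂
  rcases eq_or_lt_of_le ht₁0 with h0 | h0
  · rw [← h0, hPu0]
    rcases eq_or_lt_of_le ht₂0 with h0' | h0'
    · rw [← h0', hPu0]
    · rw [hPu t₂ h0' ht₂1, sum_Icc_eq]
      have hs₂ : 1 ≤ t₂⁻¹ := (one_le_inv₀ h0').2 ht₂1
      have := (hF t₂⁻¹ hs₂).diff_le N 0
      linarith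
  · have hs₁ : 1 ≤ t₁⁻¹ := (one_le_inv₀ h0).2 ht₁1
    have ht₂pos : 0 < t₂ := lt_of_lt_of_le h0 h₁₂
    have hs₂ : 1 ≤ t₂⁻¹ := (one_le_inv₀ ht₂pos).2 ht₂1
    have hss : t₂⁻¹ ≤ t₁⁻¹ := inv_anti₀ h0 h₁₂
    rw [hPu t₁ h0 ht₁1, hPu t₂ ht₂pos ht₂1]
    rw [← sub_nonneg, ← Finset.sum_sub_distrib]
    set Eps : ℕ → ℝ := fun n => 0 + (2*(t₁⁻¹ - t₂⁻¹)) * J1 n + (2*(t₁⁻¹ - t₂⁻¹)) * J2 n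
      with hEpsdef
    set G : ℕ → ℝ := fun n => (D t₁⁻¹ n)⁻¹ * (D t₂⁻¹ n)⁻¹ with hGdef
    have hterm : ∀ i ∈ Finset.Icc 1 N,
        (-1:ℝ)^(i+1) * (N.choose i : ℝ) * (D t₂⁻¹ i)⁻¹
          - (-1:ℝ)^(i+1) * (N.choose i:ℝ) * (D t₁⁻¹ i)⁻¹
          = (-1:ℝ)^(i+1) * (N.choose i : ℝ) * ((fun n => Eps n * G n) i) := by
      intro i _
      have h1 := hDpos t₁⁻¹ hs₁ i
      have h2 := hDpos t₂⁻¹ hs₂ i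
      have hW : (D t₂⁻¹ i)⁻¹ - (D t₁⁻¹ i)⁻¹ = Eps i * G i := by
        rw [inv_sub_inv h2.ne' h1.ne']
        have hnum : D t₁⁻¹ i - D t₂⁻¹ i = Eps i := by
          simp only [hDdef, hEpsdef]; ring
        rw [hnum, div_eq_mul_inv, mul_inv]
        simp only [hGdef]
        ring
      calc (-1:ℝ)^(i+1) * (N.choose i : ℝ) * (D t₂⁻¹ i)⁻¹
          - (-1:ℝ)^(i+1) * (N.choose i:ℝ) * (D t₁⁻¹ i)⁻¹
          = (-1:ℝ)^(i+1) * (N.choose i : ℝ) * ((D t₂⁻¹ i)⁻¹ - (D t₁⁻¹ i)⁻¹) := by ring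
        _ = (-1:ℝ)^(i+1) * (N.choose i : ℝ) * ((fun n => Eps n * G n) i) := by rw [hW]
    rw [Finset.sum_congr rfl hterm]
    rw [sum_Icc_eq (fun n => Eps n * G n) N]
    have hg0 : g 0 = fun u => 0 := by
      funext u
      simp [hgdef]
    have hJ10 : J1 0 = 0 := by
      simp only [hJ1def, hg0]
      simp
    have hJ20 : J2 0 = 0 := by
      simp only [hJ2def, hg0]
      simp
    have hEps0 : Eps 0 = 0 := by
      simp only [hEpsdef, hJ10, hJ20]; ring
    have hddEps : CMseq (dd Eps) := by
      intro k m
      rw [← dd_iter_succ_inner]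
      rw [hEpsdef, dd_succ_linear]
      have t1 := hJsign J1 (Set.Ioc 0 1) measurableSet_Ioc (fun u hu => hu.1) hgint1 hJ1def k m
      have t2 := hJsign J2 (Set.Ioi 1) measurableSet_Ioi
        (fun u hu => Set.mem_Ioi.2 (lt_trans one_pos hu)) hgint2 hJ2def k m
      have e : (-1:ℝ)^k * ((2*(t₁⁻¹ - t₂⁻¹)) * dd^[k+1] J1 m
            + (2*(t₁⁻¹ - t₂⁻¹)) * dd^[k+1] J2 m)
          = (2*(t₁⁻¹ - t₂⁻¹)) * ((-1:ℝ)^k * dd^[k+1] J1 m)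
            + (2*(t₁⁻¹ - t₂⁻¹)) * ((-1:ℝ)^k * dd^[k+1] J2 m) := by ring
      rw [e]
      exact add_nonneg (mul_nonneg (by linarith) t1) (mul_nonneg (by linarith) t2)
    have hG : CMseq G := by
      rw [hGdef]
      exact CMseq.mul (hF t₁⁻¹ hs₁) (hF t₂⁻¹ hs₂)
    have hkey := eps_mul_sign N Eps G hEps0 hddEps hG
    have e : (fun n => Eps n * G n) 0 - (-1:ℝ)^N * dd^[N] (fun n => Eps n * G n) 0
        = (-1:ℝ)^(N+1) * dd^[N] (fun n => Eps n * G n) 0 := by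
      simp only [hEps0]
      rw [pow_succ]
      ring
    rw [e]
    exact hkey
end

section
/- For every t ∈ [0,1] one has 0 ≤ P_u(t) ≤ P_u^b, where P_u^b = P_u(1) = ∑_{i=1}^N (−1)^{i+1}·binom(N,i)/(θ_A(i)+θ_C(i)); moreover P_u(0) = 0. (This bound on the upper-bound STP of a cached file by that of a backhaul file is used in the proof of the paper's Theorem 4.) -/
open MeasureTheory Finset

namespace PuAux

/-- Finite difference operator: `D k b n = (-1)^k Δ^k b (n)`. -/
def D : ℕ → (ℕ → ℝ) → ℕ → ℝ
  | 0, b, n => b n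
  | (k+1), b, n => D k b n - D k b (n+1)

@[simp] lemma D_zero (b : ℕ → ℝ) (n : ℕ) : D 0 b n = b n := rfl

lemma D_succ (k : ℕ) (b : ℕ → ℝ) (n : ℕ) : D (k+1) b n = D k b n - D k b (n+1) := rfl

lemma D_congr (k : ℕ) {a b : ℕ → ℝ} (h : ∀ n, a n = b n) : ∀ n, D k a n = D k b n := by
  induction k with
  | zero => intro n; simp [h n]
  | succ k ih => intro n; simp [D_succ, ih]

lemma D_shift (k : ℕ) (b : ℕ → ℝ) : ∀ n, D k (fun m => b (m+1)) n = D k b (n+1) := by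
  induction k with
  | zero => intro n; rfl
  | succ k ih => intro n; simp [D_succ, ih]

lemma D_sub (k : ℕ) (a b : ℕ → ℝ) : ∀ n, D k (fun m => a m - b m) n = D k a n - D k b n := by
  induction k with
  | zero => intro n; rfl
  | succ k ih => intro n; simp [D_succ, ih]; ring

lemma D_add (k : ℕ) (a b : ℕ → ℝ) : ∀ n, D k (fun m => a m + b m) n = D k a n + D k b n := by
  induction k with
  | zero => intro n; rfl
  | succ k ih => intro n; simp [D_succ, ih]; ring

lemma D_const_mul (k : ℕ) (c : ℝ) (b : ℕ → ℝ) : ∀ n, D k (fun m => c * b m) n = c * D k b n := by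
  induction k with
  | zero => intro n; rfl
  | succ k ih => intro n; simp [D_succ, ih]; ring

lemma D_delta (k : ℕ) (b : ℕ → ℝ) (n : ℕ) :
    D (k+1) b n = D k (fun m => b m - b (m+1)) n := by
  rw [D_sub, D_shift, D_succ]

/-- products of (order-bounded) completely monotone sequences are completely monotone. -/
lemma D_mul : ∀ (k : ℕ) (a b : ℕ → ℝ), (∀ j ≤ k, ∀ n, 0 ≤ D j a n) →
    (∀ j ≤ k, ∀ n, 0 ≤ D j b n) → ∀ n, 0 ≤ D k (fun m => a m * b m) n := by
  intro k
  induction k with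
  | zero =>
    intro a b ha hb n
    exact mul_nonneg (ha 0 le_rfl n) (hb 0 le_rfl n)
  | succ k ih =>
    intro a b ha hb n
    have h1 : D (k+1) (fun m => a m * b m) n
        = D k (fun m => (a m - a (m+1)) * b m) n
          + D k (fun m => a (m+1) * (b m - b (m+1))) n := by
      rw [D_delta, ← D_add]
      exact D_congr k (fun m => by ring) n
    rw [h1]
    have haΔ : ∀ j ≤ k, ∀ n, 0 ≤ D j (fun m => a m - a (m+1)) n := by
      intro j hj n
      rw [← D_delta]
      exact ha (j+1) (Nat.succ_le_succ hj) n
    have hbΔ : ∀ j ≤ k, ∀ n, 0 ≤ D j (fun m => b m - b (m+1)) n := by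
      intro j hj n
      rw [← D_delta]
      exact hb (j+1) (Nat.succ_le_succ hj) n
    have ha' : ∀ j ≤ k, ∀ n, 0 ≤ D j (fun m => a (m+1)) n := by
      intro j hj n; rw [D_shift]; exact ha j (le_trans hj (Nat.le_succ k)) (n+1)
    have hb' : ∀ j ≤ k, ∀ n, 0 ≤ D j b n := fun j hj n => hb j (le_trans hj (Nat.le_succ k)) n
    exact add_nonneg (ih _ _ haΔ hb' n) (ih _ _ ha' hbΔ n)

/-- if `φ > 0` and its increments form a completely monotone sequence, then `1/φ` is
completely monotone. -/
lemma D_inv (φ : ℕ → ℝ) (hφ : ∀ n, 0 < φ n)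
    (hψ : ∀ k n, 0 ≤ D k (fun m => φ (m+1) - φ m) n) :
    ∀ k n, 0 ≤ D k (fun m => (φ m)⁻¹) n := by
  intro k
  induction k using Nat.strong_induction_on with
  | _ k ih =>
    match k with
    | 0 => intro n; exact inv_nonneg.2 (hφ n).le
    | (k+1) =>
      intro n
      rw [D_delta]
      have hpt : ∀ m, (φ m)⁻¹ - (φ (m+1))⁻¹
          = (φ (m+1) - φ m) * ((φ m)⁻¹ * (φ (m+1))⁻¹) := by
        intro m
        have h1 := (hφ m).ne'
        have h2 := (hφ (m+1)).ne'
        field_simp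
      rw [D_congr k hpt]
      refine D_mul k _ _ (fun j hj n' => hψ j n') (fun j hj n' => ?_) n
      refine D_mul j _ _ (fun j' hj' n'' => ih j' (by omega) n'')
        (fun j' hj' n'' => ?_) n'
      exact le_of_le_of_eq (ih j' (by omega) (n''+1))
        (D_shift j' (fun m => (φ m)⁻¹) n'').symm

lemma D_eq_sum (k : ℕ) (b : ℕ → ℝ) : ∀ n,
    D k b n = ∑ j ∈ range (k+1), (-1 : ℝ)^j * (k.choose j) * b (n+j) := by
  induction k with
  | zero => intro n; simp
  | succ k ih =>
    intro n
    rw [D_succ, ih, ih]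
    rw [Finset.sum_range_succ' (fun j => (-1 : ℝ)^j * ((k+1).choose j) * b (n+j)) (k+1)]
    have hsplit : ∀ j, (-1 : ℝ)^(j+1) * ((k+1).choose (j+1)) * b (n+(j+1))
        = -((-1:ℝ)^j * (k.choose j) * b (n+1+j)) + (-1:ℝ)^(j+1) * (k.choose (j+1)) * b (n+(j+1)) := by
      intro j
      rw [Nat.choose_succ_succ]
      push_cast
      have : n + (j+1) = n + 1 + j := by omega
      rw [this]
      ring
    rw [Finset.sum_congr rfl (fun j _ => hsplit j), Finset.sum_add_distrib, Finset.sum_neg_distrib]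
    have h2 : (∑ j ∈ range (k+1), (-1:ℝ)^(j+1) * (k.choose (j+1)) * b (n+(j+1)))
        + (-1:ℝ)^0 * (((k+1).choose 0 : ℕ) : ℝ) * b (n+0)
        = ∑ j ∈ range (k+1), (-1:ℝ)^j * (k.choose j) * b (n+j) := by
      rw [Finset.sum_range_succ' (fun j => (-1:ℝ)^j * (k.choose j) * b (n+j)) k]
      rw [Finset.sum_range_succ (fun j => (-1:ℝ)^(j+1) * (k.choose (j+1)) * b (n+(j+1))) k]
      simp [Nat.choose_succ_self]
    linarith [h2]


lemma sum_Icc_one (N : ℕ) (f : ℕ → ℝ) : ∑ i ∈ Icc 1 N, f i = ∑ j ∈ range N, f (j+1) := by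
  induction N with
  | zero => simp
  | succ N ih =>
    rw [Finset.sum_Icc_succ_top (by omega : 1 ≤ N + 1), ih, Finset.sum_range_succ]

lemma key1 (N : ℕ) (v : ℕ → ℝ) :
    ∑ i ∈ Icc 1 N, (-1 : ℝ)^(i+1) * (N.choose i) * v i = ∑ k ∈ range N, D k v 1 := by
  have h1 : ∀ k, D k v 1 = D k v 0 - D (k+1) v 0 := by
    intro k; rw [D_succ]; ring
  rw [Finset.sum_congr rfl (fun k _ => h1 k), Finset.sum_range_sub' (fun k => D k v 0) N]
  have h2 : D 0 v 0 = v 0 := rfl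
  rw [h2, D_eq_sum, Finset.sum_range_succ' (fun j => (-1:ℝ)^j * (N.choose j) * v (0+j)) N]
  rw [sum_Icc_one]
  simp only [Nat.choose_zero_right, pow_zero, Nat.cast_one, zero_add]
  rw [show (1:ℝ) * 1 * v 0 = v 0 from by ring]
  rw [show v 0 - (∑ j ∈ range N, (-1:ℝ)^(j+1) * (N.choose (j+1)) * v (j+1) + v 0)
      = ∑ j ∈ range N, -((-1:ℝ)^(j+1) * (N.choose (j+1)) * v (j+1)) from by
    rw [Finset.sum_neg_distrib]; ring]
  refine Finset.sum_congr rfl (fun j _ => ?_)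
  ring

lemma key2 (N : ℕ) (hN : 1 ≤ N) (w : ℕ → ℝ) :
    ∑ i ∈ Icc 1 N, (-1 : ℝ)^(i+1) * (N.choose i) * ((i : ℝ) * w i)
      = (N : ℝ) * D (N-1) w 1 := by
  rw [D_eq_sum, sum_Icc_one]
  rw [show N - 1 + 1 = N from by omega, Finset.mul_sum]
  refine Finset.sum_congr rfl (fun j hj => ?_)
  have hc : (N : ℝ) * ((N-1).choose j) = ((j:ℝ)+1) * (N.choose (j+1)) := by
    have h := Nat.add_one_mul_choose_eq (N-1) j
    rw [show N - 1 + 1 = N from by omega] at h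
    have := congrArg (fun x : ℕ => (x : ℝ)) h
    push_cast at this
    rw [this]; ring
  have : (1:ℝ) + j = (j:ℝ) + 1 := by ring
  calc (-1:ℝ)^(j+1+1) * (N.choose (j+1)) * (((j+1:ℕ):ℝ) * w (j+1))
      = (-1:ℝ)^j * (((j:ℝ)+1) * (N.choose (j+1))) * w (j+1) := by push_cast; ring
    _ = (-1:ℝ)^j * ((N : ℝ) * ((N-1).choose j)) * w (j+1) := by rw [hc]
    _ = (N:ℝ) * ((-1)^j * ((N-1).choose j) * w (1+j)) := by rw [show 1+j = j+1 from by omega]; ring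

noncomputable def ker (β c₀ : ℝ) (k n : ℕ) (u : ℝ) : ℝ :=
  (k.factorial : ℝ) * c₀ ^ k * ∏ j ∈ Finset.range (k+1), (u ^ β + ((n : ℝ) + 1 + (j : ℝ)) * c₀)⁻¹

section kerfacts
variable {β c₀ : ℝ} (hc : 0 < c₀)

lemma fac_pos (hc : 0 < c₀) {u : ℝ} (hu : 0 ≤ u) {x : ℝ} (hx : 1 ≤ x) :
    0 < u ^ β + x * c₀ := by
  have h1 : (0:ℝ) ≤ u ^ β := Real.rpow_nonneg hu β
  nlinarith

lemma idx_ge_one (n j : ℕ) : (1:ℝ) ≤ (n : ℝ) + 1 + (j : ℝ) := by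
  have h1 : (0:ℝ) ≤ (n : ℝ) := Nat.cast_nonneg n
  have h2 : (0:ℝ) ≤ (j : ℝ) := Nat.cast_nonneg j
  linarith

lemma ker_pos (hc : 0 < c₀) {u : ℝ} (hu : 0 ≤ u) (k n : ℕ) : 0 < ker β c₀ k n u := by
  refine mul_pos (mul_pos ?_ (pow_pos hc k)) (Finset.prod_pos fun j _ => ?_)
  · exact_mod_cast Nat.cast_pos.2 k.factorial_pos
  · exact inv_pos.2 (fac_pos hc hu (idx_ge_one n j))

lemma ker_rec (hc : 0 < c₀) {u : ℝ} (hu : 0 ≤ u) (k n : ℕ) :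
    ker β c₀ k n u - ker β c₀ k (n+1) u = ker β c₀ (k+1) n u := by
  set A := u ^ β with hA
  have hA0 : 0 ≤ A := Real.rpow_nonneg hu β
  set f : ℕ → ℝ := fun j => A + ((n : ℝ) + 1 + (j : ℝ)) * c₀ with hf
  have hfpos : ∀ j, 0 < f j := fun j => fac_pos hc hu (idx_ge_one n j)
  have hprod2 : ∀ m : ℕ, ∏ j ∈ Finset.range (k+1), (A + (((m:ℕ) : ℝ) + 1 + (j:ℝ)) * c₀)⁻¹
      = ∏ j ∈ Finset.range (k+1), (A + ((m : ℝ) + 1 + (j:ℝ)) * c₀)⁻¹ := fun m => rfl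
  -- second product is product of f (j+1)
  have h2 : ∏ j ∈ Finset.range (k+1), (A + (((n+1 : ℕ) : ℝ) + 1 + (j:ℝ)) * c₀)⁻¹
      = ∏ j ∈ Finset.range (k+1), (f (j+1))⁻¹ := by
    refine Finset.prod_congr rfl fun j _ => ?_
    rw [hf]
    push_cast
    ring_nf
  have hP : ∀ j ∈ Finset.range (k+2), (f j)⁻¹ ≠ 0 := fun j _ => inv_ne_zero (hfpos j).ne'
  have e1 : ∏ j ∈ Finset.range (k+1), (f j)⁻¹
      = f (k+1) * ∏ j ∈ Finset.range (k+2), (f j)⁻¹ := by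
    rw [Finset.prod_range_succ (fun j => (f j)⁻¹) (k+1)]
    field_simp
    rw [mul_div_assoc, div_self (hfpos (k+1)).ne', mul_one]
  have e2 : ∏ j ∈ Finset.range (k+1), (f (j+1))⁻¹
      = f 0 * ∏ j ∈ Finset.range (k+2), (f j)⁻¹ := by
    rw [Finset.prod_range_succ' (fun j => (f j)⁻¹) (k+1)]
    field_simp
    rw [mul_div_assoc, div_self (hfpos 0).ne', mul_one]
  have hdiff : f (k+1) - f 0 = ((k:ℝ)+1) * c₀ := by
    simp only [hf]; push_cast; ring
  unfold ker
  rw [h2, e1, e2]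
  have : ((k+1).factorial : ℝ) = ((k:ℝ)+1) * (k.factorial : ℝ) := by
    rw [Nat.factorial_succ]; push_cast; ring
  rw [this, pow_succ]
  have hr : ∏ j ∈ Finset.range (k+1+1), (A + ((n : ℝ) + 1 + (j:ℝ)) * c₀)⁻¹
      = ∏ j ∈ Finset.range (k+2), (f j)⁻¹ := rfl
  rw [hr]
  have hk1 : f (k+1) = f 0 + ((k:ℝ)+1) * c₀ := by linarith
  rw [hk1]
  ring


end kerfacts

section bounds
variable {β c₀ : ℝ}

lemma ker_le_of_prod_ge (hc : 0 < c₀) {u L : ℝ} (hL : 0 < L) (k n : ℕ)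
    (h : L ≤ ∏ j ∈ Finset.range (k+1), (u ^ β + ((n : ℝ) + 1 + (j : ℝ)) * c₀)) :
    ker β c₀ k n u ≤ ((k.factorial : ℝ) * c₀ ^ k) * L⁻¹ := by
  unfold ker
  rw [show (∏ j ∈ Finset.range (k+1), (u ^ β + ((n : ℝ) + 1 + (j : ℝ)) * c₀)⁻¹)
      = (∏ j ∈ Finset.range (k+1), (u ^ β + ((n : ℝ) + 1 + (j : ℝ)) * c₀))⁻¹ from
    Finset.prod_inv_distrib _]
  have hK : (0:ℝ) ≤ (k.factorial : ℝ) * c₀ ^ k := by positivity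
  exact mul_le_mul_of_nonneg_left (inv_anti₀ hL h) hK

lemma ker_le_fac (hc : 0 < c₀) {u : ℝ} (hu : 0 ≤ u) (k n : ℕ) :
    ker β c₀ k n u ≤ (k.factorial : ℝ) / c₀ := by
  have h : c₀ ^ (k+1) ≤ ∏ j ∈ Finset.range (k+1), (u ^ β + ((n : ℝ) + 1 + (j : ℝ)) * c₀) := by
    calc c₀ ^ (k+1) = ∏ _j ∈ Finset.range (k+1), c₀ := by
          rw [Finset.prod_const, Finset.card_range]
      _ ≤ _ := by
          refine Finset.prod_le_prod (fun j _ => hc.le) (fun j _ => ?_)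
          have h1 : (0:ℝ) ≤ u ^ β := Real.rpow_nonneg hu β
          nlinarith [idx_ge_one n j]
  have := ker_le_of_prod_ge hc (u := u) (pow_pos hc (k+1)) k n h
  calc ker β c₀ k n u ≤ ((k.factorial : ℝ) * c₀ ^ k) * (c₀ ^ (k+1))⁻¹ := this
    _ = (k.factorial : ℝ) / c₀ := by
        rw [pow_succ]
        field_simp

lemma fact_prod_cast (k : ℕ) : ((k.factorial : ℕ) : ℝ) = ∏ j ∈ Finset.range k, ((j:ℝ)+1) := by
  rw [← Finset.prod_range_add_one_eq_factorial]
  push_cast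
  rfl

lemma ker_le_inv (hc : 0 < c₀) {u : ℝ} (hu : 0 < u) (k n : ℕ) :
    ker β c₀ k n u ≤ (u ^ β)⁻¹ := by
  have hA : 0 < u ^ β := Real.rpow_pos_of_pos hu β
  have hK : (0:ℝ) < (k.factorial : ℝ) * c₀ ^ k := by positivity
  have h : u ^ β * ((k.factorial : ℝ) * c₀ ^ k)
      ≤ ∏ j ∈ Finset.range (k+1), (u ^ β + ((n : ℝ) + 1 + (j : ℝ)) * c₀) := by
    rw [Finset.prod_range_succ' (fun j => u ^ β + ((n : ℝ) + 1 + (j : ℝ)) * c₀) k]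
    have h1 : ∏ j ∈ Finset.range k, (((j:ℝ)+1) * c₀)
        ≤ ∏ j ∈ Finset.range k, (u ^ β + ((n : ℝ) + 1 + ((j+1 : ℕ):ℝ)) * c₀) := by
      refine Finset.prod_le_prod (fun j _ => by positivity) (fun j _ => ?_)
      have h2 : (0:ℝ) ≤ u ^ β := hA.le
      have h3 : (j:ℝ) + 1 ≤ (n : ℝ) + 1 + ((j+1 : ℕ):ℝ) := by
        push_cast
        nlinarith [Nat.cast_nonneg (α := ℝ) n, Nat.cast_nonneg (α := ℝ) j]
      nlinarith
    have h4 : ∏ j ∈ Finset.range k, (((j:ℝ)+1) * c₀) = (k.factorial : ℝ) * c₀ ^ k := by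
      rw [Finset.prod_mul_distrib, Finset.prod_const, Finset.card_range, ← fact_prod_cast]
    have h5 : u ^ β ≤ u ^ β + ((n : ℝ) + 1 + ((0:ℕ):ℝ)) * c₀ := by
      have := idx_ge_one n 0
      nlinarith
    calc u ^ β * ((k.factorial : ℝ) * c₀ ^ k)
        = (∏ j ∈ Finset.range k, (((j:ℝ)+1) * c₀)) * (u ^ β) := by rw [h4]; ring
      _ ≤ (∏ j ∈ Finset.range k, (u ^ β + ((n : ℝ) + 1 + ((j+1 : ℕ):ℝ)) * c₀)) * (u ^ β + ((n : ℝ) + 1 + ((0:ℕ):ℝ)) * c₀) := by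
          refine mul_le_mul h1 h5 hA.le (Finset.prod_nonneg (fun j _ => by positivity))
      _ = _ := by norm_num
  have := ker_le_of_prod_ge hc (u := u) (by positivity) k n h
  calc ker β c₀ k n u ≤ ((k.factorial : ℝ) * c₀ ^ k) * (u ^ β * ((k.factorial : ℝ) * c₀ ^ k))⁻¹ := this
    _ = (u ^ β)⁻¹ := by field_simp

lemma ker_le_pow (hc : 0 < c₀) {u : ℝ} (hu : 0 < u) (k n : ℕ) :
    ker β c₀ k n u ≤ ((k.factorial : ℝ) * c₀ ^ k) * ((u ^ β) ^ (k+1))⁻¹ := by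
  have hA : 0 < u ^ β := Real.rpow_pos_of_pos hu β
  refine ker_le_of_prod_ge hc (by positivity) k n ?_
  calc (u ^ β) ^ (k+1) = ∏ _j ∈ Finset.range (k+1), u ^ β := by
        rw [Finset.prod_const, Finset.card_range]
    _ ≤ _ := by
        refine Finset.prod_le_prod (fun j _ => hA.le) (fun j _ => ?_)
        nlinarith [idx_ge_one n j]


end bounds

section integrability
variable {β c₀ : ℝ}

lemma meas_rpow (hβ : 0 ≤ β) : Measurable (fun u : ℝ => u ^ β) :=
  (Real.continuous_rpow_const hβ).measurable

lemma meas_ker (hβ : 0 ≤ β) (k n : ℕ) : Measurable (fun u : ℝ => ker β c₀ k n u) := by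
  unfold ker
  exact measurable_const.mul
    (Finset.measurable_prod _ fun j _ => ((meas_rpow hβ).add measurable_const).inv)

/-- split [0,∞) integrability into a bounded piece and an `u^(1-β)` tail. -/
lemma intOn_split (hβ : 2 < β) {f : ℝ → ℝ} (hm : Measurable f) (C1 C2 : ℝ)
    (h1 : ∀ u ∈ Set.Ioc (0:ℝ) 1, ‖f u‖ ≤ C1)
    (h2 : ∀ u ∈ Set.Ioi (1:ℝ), ‖f u‖ ≤ C2 * u ^ (1-β)) :
    IntegrableOn f (Set.Ioi (0:ℝ)) := by
  rw [← Set.Ioc_union_Ioi_eq_Ioi (zero_le_one (α := ℝ))]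
  refine MeasureTheory.IntegrableOn.union ?_ ?_
  · refine Integrable.mono' (g := fun _ => C1) (integrableOn_const measure_Ioc_lt_top.ne)
      hm.aestronglyMeasurable ?_
    exact (ae_restrict_iff' measurableSet_Ioc).2 (Filter.Eventually.of_forall h1)
  · have hint : IntegrableOn (fun u : ℝ => C2 * u ^ (1-β)) (Set.Ioi 1) :=
      (integrableOn_Ioi_rpow_of_lt (by linarith) one_pos).const_mul C2
    refine Integrable.mono' hint hm.aestronglyMeasurable ?_
    exact (ae_restrict_iff' measurableSet_Ioi).2 (Filter.Eventually.of_forall h2)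

/-- integrand of `thetaC`. -/
lemma intH (hβ : 2 < β) (hc : 0 < c₀) {x : ℝ} (hx : 0 ≤ x) :
    IntegrableOn (fun u : ℝ => (x * c₀) * u / (u ^ β + x * c₀)) (Set.Ioi (0:ℝ)) := by
  have hβ0 : (0:ℝ) ≤ β := by linarith
  have hmf : Measurable (fun u : ℝ => (x * c₀) * u / (u ^ β + x * c₀)) :=
    (measurable_const.mul measurable_id).div ((meas_rpow hβ0).add measurable_const)
  refine intOn_split hβ hmf 1 (x * c₀) (fun u hu => ?_) (fun u hu => ?_)
  · have hu0 : 0 < u := hu.1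
    have hd : 0 < u ^ β + x * c₀ := by
      have := Real.rpow_pos_of_pos hu0 β
      nlinarith
    have hnn : 0 ≤ (x * c₀) * u / (u ^ β + x * c₀) := by positivity
    rw [Real.norm_eq_abs, abs_of_nonneg hnn, div_le_one hd]
    nlinarith [Real.rpow_pos_of_pos hu0 β, hu.2]
  · have hu1 : (1:ℝ) < u := hu
    have hu0 : (0:ℝ) < u := by linarith
    have hA : 0 < u ^ β := Real.rpow_pos_of_pos hu0 β
    have hd : 0 < u ^ β + x * c₀ := by nlinarith
    have hnn : 0 ≤ (x * c₀) * u / (u ^ β + x * c₀) := by positivity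
    rw [Real.norm_eq_abs, abs_of_nonneg hnn]
    have h1 : (x * c₀) * u / (u ^ β + x * c₀) ≤ (x * c₀) * u / u ^ β := by
      refine div_le_div_of_nonneg_left (by positivity) hA (by nlinarith)
    have h2 : (x * c₀) * u / u ^ β = (x * c₀) * u ^ (1-β) := by
      rw [Real.rpow_sub hu0, Real.rpow_one]
      ring
    linarith [h1, h2 ▸ h1]

lemma intW (hβ : 2 < β) (hc : 0 < c₀) (k n : ℕ) (hk : 1 ≤ k) :
    IntegrableOn (fun u : ℝ => u ^ (β+1) * ker β c₀ k n u) (Set.Ioi (0:ℝ)) := by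
  have hβ0 : (0:ℝ) ≤ β := by linarith
  have hm : Measurable (fun u : ℝ => u ^ (β+1) * ker β c₀ k n u) :=
    (meas_rpow (by linarith)).mul (meas_ker hβ0 k n)
  refine intOn_split hβ hm 1 ((k.factorial : ℝ) * c₀ ^ k) (fun u hu => ?_) (fun u hu => ?_)
  · have hu0 : 0 < u := hu.1
    have hA : 0 < u ^ β := Real.rpow_pos_of_pos hu0 β
    have hnn : 0 ≤ u ^ (β+1) * ker β c₀ k n u := by
      have := ker_pos hc hu0.le k n (β := β)
      positivity
    rw [Real.norm_eq_abs, abs_of_nonneg hnn]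
    have h1 : u ^ (β+1) * ker β c₀ k n u ≤ u ^ (β+1) * (u ^ β)⁻¹ :=
      mul_le_mul_of_nonneg_left (ker_le_inv hc hu0 k n) (by positivity)
    have h2 : u ^ (β+1) * (u ^ β)⁻¹ = u := by
      rw [Real.rpow_add hu0, Real.rpow_one]
      field_simp
    calc u ^ (β+1) * ker β c₀ k n u ≤ u ^ (β+1) * (u ^ β)⁻¹ := h1
      _ = u := h2
      _ ≤ 1 := hu.2
  · have hu1 : (1:ℝ) ≤ u := le_of_lt hu
    have hu0 : (0:ℝ) < u := by linarith
    have hA : 0 < u ^ β := Real.rpow_pos_of_pos hu0 β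
    have hA1 : 1 ≤ u ^ β := by
      calc (1:ℝ) = 1 ^ β := (Real.one_rpow β).symm
        _ ≤ u ^ β := Real.rpow_le_rpow zero_le_one hu1 hβ0
    have hnn : 0 ≤ u ^ (β+1) * ker β c₀ k n u := by
      have := ker_pos hc hu0.le k n (β := β)
      positivity
    rw [Real.norm_eq_abs, abs_of_nonneg hnn]
    have h1 : u ^ (β+1) * ker β c₀ k n u
        ≤ u ^ (β+1) * (((k.factorial : ℝ) * c₀ ^ k) * ((u ^ β) ^ (k+1))⁻¹) :=
      mul_le_mul_of_nonneg_left (ker_le_pow hc hu0 k n) (by positivity)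
    have hpow : (u ^ β) ^ 2 ≤ (u ^ β) ^ (k+1) := pow_le_pow_right₀ hA1 (by omega)
    have h2 : u ^ (β+1) * (((k.factorial : ℝ) * c₀ ^ k) * ((u ^ β) ^ (k+1))⁻¹)
        ≤ u ^ (β+1) * (((k.factorial : ℝ) * c₀ ^ k) * ((u ^ β) ^ 2)⁻¹) := by
      have := inv_anti₀ (by positivity : (0:ℝ) < (u ^ β) ^ 2) hpow
      have hKnn : (0:ℝ) ≤ (k.factorial : ℝ) * c₀ ^ k := by positivity
      have hunn : (0:ℝ) ≤ u ^ (β+1) := by positivity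
      nlinarith [mul_le_mul_of_nonneg_left this hKnn]
    have h3 : u ^ (β+1) * (((k.factorial : ℝ) * c₀ ^ k) * ((u ^ β) ^ 2)⁻¹)
        = ((k.factorial : ℝ) * c₀ ^ k) * u ^ (1-β) := by
      rw [Real.rpow_add hu0, Real.rpow_one, Real.rpow_sub hu0, Real.rpow_one, sq]
      field_simp
    linarith
lemma intV (hβ : 2 < β) (hc : 0 < c₀) (k n : ℕ) :
    IntegrableOn (fun u : ℝ => c₀ * u * ker β c₀ k n u) (Set.Ioi (0:ℝ)) := by
  have hβ0 : (0:ℝ) ≤ β := by linarith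
  have hm : Measurable (fun u : ℝ => c₀ * u * ker β c₀ k n u) :=
    (measurable_const.mul measurable_id).mul (meas_ker hβ0 k n)
  refine intOn_split hβ hm (k.factorial : ℝ) c₀ (fun u hu => ?_) (fun u hu => ?_)
  · have hu0 : 0 < u := hu.1
    have hker := ker_pos hc hu0.le k n (β := β)
    have hnn : 0 ≤ c₀ * u * ker β c₀ k n u := by positivity
    rw [Real.norm_eq_abs, abs_of_nonneg hnn]
    calc c₀ * u * ker β c₀ k n u ≤ c₀ * 1 * ((k.factorial : ℝ) / c₀) := by
          refine mul_le_mul (by nlinarith [hu.2]) (ker_le_fac hc hu0.le k n) hker.le (by positivity)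
      _ = (k.factorial : ℝ) := by field_simp
  · have hu1 : (1:ℝ) ≤ u := le_of_lt hu
    have hu0 : (0:ℝ) < u := by linarith
    have hA : 0 < u ^ β := Real.rpow_pos_of_pos hu0 β
    have hker := ker_pos hc hu0.le k n (β := β)
    have hnn : 0 ≤ c₀ * u * ker β c₀ k n u := by positivity
    rw [Real.norm_eq_abs, abs_of_nonneg hnn]
    have h1 : c₀ * u * ker β c₀ k n u ≤ c₀ * u * (u ^ β)⁻¹ :=
      mul_le_mul_of_nonneg_left (ker_le_inv hc hu0 k n) (by positivity)
    have h2 : c₀ * u * (u ^ β)⁻¹ = c₀ * u ^ (1-β) := by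
      rw [Real.rpow_sub hu0, Real.rpow_one]
      ring
    linarith


end integrability

noncomputable def PP (β c₀ : ℝ) (n : ℕ) : ℝ :=
  ∫ u in Set.Ioi (0:ℝ), (((n:ℝ)+1) * c₀) * u / (u ^ β + ((n:ℝ)+1) * c₀)

noncomputable def QQ (β c₀ : ℝ) (n : ℕ) : ℝ :=
  ∫ u in Set.Ioc (0:ℝ) 1, (((n:ℝ)+1) * c₀) * u / (u ^ β + ((n:ℝ)+1) * c₀)

noncomputable def phi (β c₀ t : ℝ) (n : ℕ) : ℝ := t * (1 - 2 * QQ β c₀ n) + 2 * PP β c₀ n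

noncomputable def rho (β c₀ : ℝ) (n : ℕ) : ℝ := 2 * ∫ u in Set.Ioi (0:ℝ), c₀ * u * ker β c₀ 0 n u

section reps
variable {β c₀ t : ℝ}

lemma nplus_nonneg (n : ℕ) : (0:ℝ) ≤ (n:ℝ) + 1 := by positivity

lemma H_diff (hc : 0 < c₀) {u : ℝ} (hu : 0 < u) (n : ℕ) :
    (((n:ℝ)+2) * c₀) * u / (u ^ β + ((n:ℝ)+2) * c₀)
      - (((n:ℝ)+1) * c₀) * u / (u ^ β + ((n:ℝ)+1) * c₀)
      = u ^ (β+1) * ker β c₀ 1 n u := by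
  have hd1 : 0 < u ^ β + ((n:ℝ)+1) * c₀ := fac_pos hc hu.le (by push_cast; linarith [Nat.cast_nonneg (α := ℝ) n])
  have hd2 : 0 < u ^ β + ((n:ℝ)+2) * c₀ := fac_pos hc hu.le (by push_cast; linarith [Nat.cast_nonneg (α := ℝ) n])
  have hker : ker β c₀ 1 n u
      = c₀ * ((u ^ β + ((n:ℝ)+1) * c₀)⁻¹ * (u ^ β + ((n:ℝ)+2) * c₀)⁻¹) := by
    unfold ker
    rw [Finset.prod_range_succ, Finset.prod_range_one]
    norm_num
    refine Or.inl (Or.inl (Or.inl (by ring)))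
  rw [hker, Real.rpow_add hu, Real.rpow_one]
  field_simp
  ring

lemma PP_diff (hβ : 2 < β) (hc : 0 < c₀) (n : ℕ) :
    PP β c₀ (n+1) - PP β c₀ n = ∫ u in Set.Ioi (0:ℝ), u ^ (β+1) * ker β c₀ 1 n u := by
  unfold PP
  rw [← integral_sub (intH hβ hc (nplus_nonneg (n+1))) (intH hβ hc (nplus_nonneg n))]
  refine setIntegral_congr_fun measurableSet_Ioi (fun u hu => ?_)
  have hcast : ((n+1:ℕ):ℝ) + 1 = (n:ℝ) + 2 := by push_cast; ring
  rw [hcast]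
  exact H_diff hc hu n

lemma QQ_diff (hβ : 2 < β) (hc : 0 < c₀) (n : ℕ) :
    QQ β c₀ (n+1) - QQ β c₀ n = ∫ u in Set.Ioc (0:ℝ) 1, u ^ (β+1) * ker β c₀ 1 n u := by
  unfold QQ
  rw [← integral_sub ((intH hβ hc (nplus_nonneg (n+1))).mono_set Set.Ioc_subset_Ioi_self)
    ((intH hβ hc (nplus_nonneg n)).mono_set Set.Ioc_subset_Ioi_self)]
  refine setIntegral_congr_fun measurableSet_Ioc (fun u hu => ?_)
  have hcast : ((n+1:ℕ):ℝ) + 1 = (n:ℝ) + 2 := by push_cast; ring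
  rw [hcast]
  exact H_diff hc hu.1 n

lemma D_psi (hβ : 2 < β) (hc : 0 < c₀) : ∀ k n,
    D k (fun m => phi β c₀ t (m+1) - phi β c₀ t m) n
      = 2 * (∫ u in Set.Ioi (0:ℝ), u ^ (β+1) * ker β c₀ (k+1) n u)
        - 2 * t * (∫ u in Set.Ioc (0:ℝ) 1, u ^ (β+1) * ker β c₀ (k+1) n u) := by
  intro k
  induction k with
  | zero =>
    intro n
    show phi β c₀ t (n+1) - phi β c₀ t n = _
    unfold phi
    rw [show t * (1 - 2 * QQ β c₀ (n+1)) + 2 * PP β c₀ (n+1)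
        - (t * (1 - 2 * QQ β c₀ n) + 2 * PP β c₀ n)
        = 2 * (PP β c₀ (n+1) - PP β c₀ n) - 2 * t * (QQ β c₀ (n+1) - QQ β c₀ n) from by ring]
    rw [PP_diff hβ hc n, QQ_diff hβ hc n]
  | succ k ih =>
    intro n
    rw [D_succ, ih n, ih (n+1)]
    have hIoi : (∫ u in Set.Ioi (0:ℝ), u ^ (β+1) * ker β c₀ (k+1) n u)
        - (∫ u in Set.Ioi (0:ℝ), u ^ (β+1) * ker β c₀ (k+1) (n+1) u)
        = ∫ u in Set.Ioi (0:ℝ), u ^ (β+1) * ker β c₀ (k+1+1) n u := by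
      rw [← integral_sub (intW hβ hc (k+1) n (by omega)) (intW hβ hc (k+1) (n+1) (by omega))]
      refine setIntegral_congr_fun measurableSet_Ioi (fun u hu => ?_)
      have := ker_rec hc (le_of_lt hu) (k+1) n (β := β)
      calc u ^ (β+1) * ker β c₀ (k+1) n u - u ^ (β+1) * ker β c₀ (k+1) (n+1) u
          = u ^ (β+1) * (ker β c₀ (k+1) n u - ker β c₀ (k+1) (n+1) u) := by ring
        _ = u ^ (β+1) * ker β c₀ (k+1+1) n u := by rw [this]
    have hIoc : (∫ u in Set.Ioc (0:ℝ) 1, u ^ (β+1) * ker β c₀ (k+1) n u)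
        - (∫ u in Set.Ioc (0:ℝ) 1, u ^ (β+1) * ker β c₀ (k+1) (n+1) u)
        = ∫ u in Set.Ioc (0:ℝ) 1, u ^ (β+1) * ker β c₀ (k+1+1) n u := by
      rw [← integral_sub ((intW hβ hc (k+1) n (by omega)).mono_set Set.Ioc_subset_Ioi_self)
        ((intW hβ hc (k+1) (n+1) (by omega)).mono_set Set.Ioc_subset_Ioi_self)]
      refine setIntegral_congr_fun measurableSet_Ioc (fun u hu => ?_)
      have := ker_rec hc (le_of_lt hu.1) (k+1) n (β := β)
      calc u ^ (β+1) * ker β c₀ (k+1) n u - u ^ (β+1) * ker β c₀ (k+1) (n+1) u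
          = u ^ (β+1) * (ker β c₀ (k+1) n u - ker β c₀ (k+1) (n+1) u) := by ring
        _ = u ^ (β+1) * ker β c₀ (k+1+1) n u := by rw [this]
    linear_combination 2 * hIoi - 2 * t * hIoc

lemma D_rho (hβ : 2 < β) (hc : 0 < c₀) : ∀ k n,
    D k (rho β c₀) n = 2 * ∫ u in Set.Ioi (0:ℝ), c₀ * u * ker β c₀ k n u := by
  intro k
  induction k with
  | zero => intro n; rfl
  | succ k ih =>
    intro n
    rw [D_succ, ih n, ih (n+1)]
    rw [show 2 * (∫ u in Set.Ioi (0:ℝ), c₀ * u * ker β c₀ k n u)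
        - 2 * (∫ u in Set.Ioi (0:ℝ), c₀ * u * ker β c₀ k (n+1) u)
        = 2 * ((∫ u in Set.Ioi (0:ℝ), c₀ * u * ker β c₀ k n u)
          - (∫ u in Set.Ioi (0:ℝ), c₀ * u * ker β c₀ k (n+1) u)) from by ring]
    rw [← integral_sub (intV hβ hc k n) (intV hβ hc k (n+1))]
    congr 1
    refine setIntegral_congr_fun measurableSet_Ioi (fun u hu => ?_)
    have := ker_rec hc (le_of_lt hu) k n (β := β)
    calc c₀ * u * ker β c₀ k n u - c₀ * u * ker β c₀ k (n+1) u
        = c₀ * u * (ker β c₀ k n u - ker β c₀ k (n+1) u) := by ring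
      _ = c₀ * u * ker β c₀ (k+1) n u := by rw [this]

lemma D_rho_nonneg (hβ : 2 < β) (hc : 0 < c₀) (k n : ℕ) : 0 ≤ D k (rho β c₀) n := by
  rw [D_rho hβ hc]
  have : 0 ≤ ∫ u in Set.Ioi (0:ℝ), c₀ * u * ker β c₀ k n u := by
    refine setIntegral_nonneg measurableSet_Ioi (fun u hu => ?_)
    have h1 := ker_pos hc (le_of_lt hu) k n (β := β)
    have h2 : (0:ℝ) < u := hu
    positivity
  linarith

lemma D_psi_nonneg (hβ : 2 < β) (hc : 0 < c₀) (ht0 : 0 ≤ t) (ht1 : t ≤ 1) (k n : ℕ) :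
    0 ≤ D k (fun m => phi β c₀ t (m+1) - phi β c₀ t m) n := by
  rw [D_psi hβ hc]
  have hnn : ∀ u ∈ Set.Ioi (0:ℝ), 0 ≤ u ^ (β+1) * ker β c₀ (k+1) n u := by
    intro u hu
    have h1 := ker_pos hc (le_of_lt hu) (k+1) n (β := β)
    have h2 : (0:ℝ) < u := hu
    positivity
  have h2 : (∫ u in Set.Ioc (0:ℝ) 1, u ^ (β+1) * ker β c₀ (k+1) n u)
      ≤ ∫ u in Set.Ioi (0:ℝ), u ^ (β+1) * ker β c₀ (k+1) n u := by
    refine setIntegral_mono_set (intW hβ hc (k+1) n (by omega)) ?_ ?_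
    · exact (ae_restrict_iff' measurableSet_Ioi).2 (Filter.Eventually.of_forall hnn)
    · exact HasSubset.Subset.eventuallyLE Set.Ioc_subset_Ioi_self
  have h3 : 0 ≤ ∫ u in Set.Ioc (0:ℝ) 1, u ^ (β+1) * ker β c₀ (k+1) n u :=
    setIntegral_nonneg measurableSet_Ioc (fun u hu => hnn u hu.1)
  nlinarith

lemma QQ_le_half (hβ : 2 < β) (hc : 0 < c₀) (n : ℕ) : QQ β c₀ n ≤ 1/2 := by
  have hmono : QQ β c₀ n ≤ ∫ u in Set.Ioc (0:ℝ) 1, u := by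
    refine setIntegral_mono_on ((intH hβ hc (nplus_nonneg n)).mono_set Set.Ioc_subset_Ioi_self)
      ((continuous_id.integrableOn_Ioc)) measurableSet_Ioc (fun u hu => ?_)
    have hu0 : (0:ℝ) < u := hu.1
    have hd : 0 < u ^ β + ((n:ℝ)+1) * c₀ :=
      fac_pos hc hu0.le (by linarith [Nat.cast_nonneg (α := ℝ) n])
    rw [div_le_iff₀ hd]
    nlinarith [Real.rpow_pos_of_pos hu0 β, Nat.cast_nonneg (α := ℝ) n]
  have hid : (∫ u in Set.Ioc (0:ℝ) 1, u) = 1/2 := by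
    rw [← intervalIntegral.integral_of_le (zero_le_one (α := ℝ))]
    rw [integral_id]
    norm_num
  linarith

lemma PP_pos (hβ : 2 < β) (hc : 0 < c₀) (n : ℕ) : 0 < PP β c₀ n := by
  set m : ℝ := (((n:ℝ)+1) * c₀) / ((2:ℝ) ^ β + ((n:ℝ)+1) * c₀) with hm
  have hnc : (0:ℝ) < ((n:ℝ)+1) * c₀ := by positivity
  have h2β : (0:ℝ) < (2:ℝ) ^ β := Real.rpow_pos_of_pos two_pos β
  have hmpos : 0 < m := by rw [hm]; positivity
  have hnn : ∀ u ∈ Set.Ioi (0:ℝ), 0 ≤ (((n:ℝ)+1) * c₀) * u / (u ^ β + ((n:ℝ)+1) * c₀) := by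
    intro u hu
    have hu0 : (0:ℝ) < u := hu
    have hd : 0 < u ^ β + ((n:ℝ)+1) * c₀ :=
      fac_pos hc hu0.le (by linarith [Nat.cast_nonneg (α := ℝ) n])
    positivity
  have hsub : Set.Ioc (1:ℝ) 2 ⊆ Set.Ioi (0:ℝ) := by
    intro u hu
    exact lt_trans one_pos hu.1
  have hstep1 : (∫ u in Set.Ioc (1:ℝ) 2, (((n:ℝ)+1) * c₀) * u / (u ^ β + ((n:ℝ)+1) * c₀))
      ≤ PP β c₀ n := by
    unfold PP
    refine setIntegral_mono_set (intH hβ hc (nplus_nonneg n)) ?_ ?_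
    · exact (ae_restrict_iff' measurableSet_Ioi).2 (Filter.Eventually.of_forall hnn)
    · exact HasSubset.Subset.eventuallyLE hsub
  have hstep2 : (∫ _u in Set.Ioc (1:ℝ) 2, m)
      ≤ ∫ u in Set.Ioc (1:ℝ) 2, (((n:ℝ)+1) * c₀) * u / (u ^ β + ((n:ℝ)+1) * c₀) := by
    refine setIntegral_mono_on (integrableOn_const measure_Ioc_lt_top.ne)
      ((intH hβ hc (nplus_nonneg n)).mono_set hsub) measurableSet_Ioc (fun u hu => ?_)
    have hu1 : (1:ℝ) < u := hu.1
    have hu2 : u ≤ 2 := hu.2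
    have hu0 : (0:ℝ) < u := by linarith
    have hA : 0 < u ^ β := Real.rpow_pos_of_pos hu0 β
    have hub : u ^ β ≤ (2:ℝ) ^ β := Real.rpow_le_rpow hu0.le hu2 (by linarith)
    rw [hm]
    refine div_le_div₀ (by positivity) (by nlinarith) (by positivity) (by nlinarith)
  have hconst : (∫ _u in Set.Ioc (1:ℝ) 2, m) = m := by
    rw [setIntegral_const]
    rw [Real.volume_real_Ioc]
    norm_num
  linarith
lemma phi_pos (hβ : 2 < β) (hc : 0 < c₀) (ht0 : 0 ≤ t) (n : ℕ) : 0 < phi β c₀ t n := by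
  have h1 := QQ_le_half hβ hc n
  have h2 := PP_pos hβ hc n
  unfold phi
  nlinarith [mul_nonneg ht0 (by linarith : (0:ℝ) ≤ 1 - 2 * QQ β c₀ n)]


end reps

/-- `v s i = s/(θ_A(i) s + θ_C(i))`. -/
noncomputable def vv (β τ α s : ℝ) (i : ℕ) : ℝ :=
  s * (_root_.thetaA β τ α i * s + _root_.thetaC β τ α i)⁻¹

end PuAux

open PuAux

/-- With `α = (N!)^{−1/N}`: for every `t ∈ [0,1]`, `0 ≤ P_u(t) ≤ P_u^b`, where
`P_u^b = P_u(1) = ∑_{i=1}^N (−1)^{i+1}·binom(N,i)/(θ_A(i)+θ_C(i))`; moreover `P_u(0) = 0`.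
(Used in the proof of the paper's Theorem 4.) -/
theorem Pu_nonneg_le_Pub (β τ : ℝ) (hβ : 2 < β) (hτ : 0 < τ) (N : ℕ) (hN : 1 ≤ N)
    (α : ℝ) (hα : α = (N.factorial : ℝ) ^ (-(1 : ℝ) / (N : ℝ))) :
    (∀ t ∈ Set.Icc (0 : ℝ) 1, 0 ≤ Pu β τ α N t ∧ Pu β τ α N t ≤ Pu β τ α N 1) ∧
    Pu β τ α N 1 =
      ∑ i ∈ Finset.Icc 1 N,
        (-1 : ℝ) ^ (i + 1) * (N.choose i : ℝ) / (thetaA β τ α i + thetaC β τ α i) ∧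
    Pu β τ α N 0 = 0 := by
  have hα0 : 0 < α := by
    rw [hα]
    exact Real.rpow_pos_of_pos (by exact_mod_cast N.factorial_pos) _
  set c₀ : ℝ := α * τ with hc₀
  have hc : 0 < c₀ := mul_pos hα0 hτ
  -- bridges
  have bridgeA : ∀ n : ℕ, thetaA β τ α (n+1) = 1 - 2 * QQ β c₀ n := by
    intro n
    unfold thetaA QQ
    rw [intervalIntegral.integral_of_le (zero_le_one (α := ℝ))]
    have : (fun u : ℝ => ((↑(n+1) : ℝ) * α * τ) * u / (u ^ β + (↑(n+1) : ℝ) * α * τ))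
        = fun u : ℝ => (((n:ℝ)+1) * c₀) * u / (u ^ β + ((n:ℝ)+1) * c₀) := by
      funext u
      rw [hc₀]
      push_cast
      ring_nf
    rw [this]
  have bridgeC : ∀ n : ℕ, thetaC β τ α (n+1) = 2 * PP β c₀ n := by
    intro n
    unfold thetaC PP
    have : (fun u : ℝ => ((↑(n+1) : ℝ) * α * τ) * u / (u ^ β + (↑(n+1) : ℝ) * α * τ))
        = fun u : ℝ => (((n:ℝ)+1) * c₀) * u / (u ^ β + ((n:ℝ)+1) * c₀) := by
      funext u
      rw [hc₀]
      push_cast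
      ring_nf
    rw [this]
  have phi_eq : ∀ (s : ℝ) (n : ℕ),
      thetaA β τ α (n+1) * s + thetaC β τ α (n+1) = phi β c₀ s n := by
    intro s n
    rw [bridgeA n, bridgeC n]
    unfold phi
    ring
  have ker_zero : ∀ n (u : ℝ), ker β c₀ 0 n u = (u ^ β + ((n:ℝ)+1) * c₀)⁻¹ := by
    intro n u
    unfold ker
    simp
  have thetaC_eq_rho : ∀ n : ℕ, thetaC β τ α (n+1) = ((n:ℝ)+1) * rho β c₀ n := by
    intro n
    rw [bridgeC n]
    unfold PP rho
    rw [show (fun u : ℝ => (((n:ℝ)+1) * c₀) * u / (u ^ β + ((n:ℝ)+1) * c₀))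
        = fun u : ℝ => ((n:ℝ)+1) * (c₀ * u * ker β c₀ 0 n u) from by
      funext u
      rw [ker_zero n u, div_eq_mul_inv]
      ring]
    rw [MeasureTheory.integral_const_mul]
    ring
  -- the sequences
  have hPu : ∀ s : ℝ, Pu β τ α N s
      = ∑ i ∈ Icc 1 N, (-1 : ℝ)^(i+1) * (N.choose i : ℝ) * vv β τ α s i := by
    intro s
    unfold Pu vv
    refine Finset.sum_congr rfl (fun i _ => ?_)
    rw [div_eq_mul_inv, mul_assoc]
  have hCMr : ∀ s : ℝ, 0 ≤ s → s ≤ 1 →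
      ∀ k n, 0 ≤ D k (fun m => (phi β c₀ s m)⁻¹) n := by
    intro s hs0 hs1
    exact D_inv (phi β c₀ s) (phi_pos hβ hc hs0)
      (fun k n => D_psi_nonneg hβ hc hs0 hs1 k n)
  have hvphi : ∀ (s : ℝ) (m : ℕ), vv β τ α s (m+1) = s * (phi β c₀ s m)⁻¹ := by
    intro s m
    unfold vv
    rw [phi_eq s m]
  have hv_shift : ∀ (s : ℝ) (k : ℕ), D k (vv β τ α s) 1
      = s * D k (fun m => (phi β c₀ s m)⁻¹) 0 := by
    intro s k
    rw [← D_shift k (vv β τ α s) 0]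
    rw [D_congr k (fun m => hvphi s m) 0]
    exact D_const_mul k s (fun m => (phi β c₀ s m)⁻¹) 0
  have hPu_nonneg : ∀ s : ℝ, 0 ≤ s → s ≤ 1 → 0 ≤ Pu β τ α N s := by
    intro s hs0 hs1
    rw [hPu s, key1 N (vv β τ α s)]
    refine Finset.sum_nonneg (fun k _ => ?_)
    rw [hv_shift s k]
    exact mul_nonneg hs0 (hCMr s hs0 hs1 k 0)
  -- monotonicity
  have hmono : ∀ t : ℝ, 0 ≤ t → t ≤ 1 → Pu β τ α N t ≤ Pu β τ α N 1 := by
    intro t ht0 ht1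
    rw [← sub_nonneg]
    set what : ℕ → ℝ := fun n => rho β c₀ n * ((phi β c₀ 1 n)⁻¹ * (phi β c₀ t n)⁻¹) with hwhat
    set w : ℕ → ℝ := fun i => what (i-1) with hw
    have hvdiff : ∀ i ∈ Icc 1 N, vv β τ α 1 i - vv β τ α t i = (1-t) * ((i:ℝ) * w i) := by
      intro i hi
      have hi1 : 1 ≤ i := (Finset.mem_Icc.1 hi).1
      obtain ⟨n, rfl⟩ : ∃ n, i = n + 1 := ⟨i - 1, by omega⟩
      have h1 : (0:ℝ) < phi β c₀ 1 n := phi_pos hβ hc zero_le_one n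
      have h2 : (0:ℝ) < phi β c₀ t n := phi_pos hβ hc ht0 n
      have e1 : vv β τ α 1 (n+1) = (phi β c₀ 1 n)⁻¹ := by
        rw [hvphi 1 n]; ring
      have e2 : vv β τ α t (n+1) = t * (phi β c₀ t n)⁻¹ := hvphi t n
      have ekey : phi β c₀ t n - t * phi β c₀ 1 n = (1-t) * (((n:ℝ)+1) * rho β c₀ n) := by
        rw [← thetaC_eq_rho n, ← phi_eq t n, ← phi_eq 1 n]
        ring
      have ew : w (n+1) = what n := rfl
      have e3 : (phi β c₀ 1 n)⁻¹ - t * (phi β c₀ t n)⁻¹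
          = (phi β c₀ t n - t * phi β c₀ 1 n)
            * ((phi β c₀ 1 n)⁻¹ * (phi β c₀ t n)⁻¹) := by
        field_simp
      rw [e1, e2, e3, ekey, ew, hwhat]
      push_cast
      ring
    have hsum : Pu β τ α N 1 - Pu β τ α N t
        = (1-t) * ∑ i ∈ Icc 1 N, (-1 : ℝ)^(i+1) * (N.choose i : ℝ) * ((i:ℝ) * w i) := by
      rw [hPu 1, hPu t, ← Finset.sum_sub_distrib, Finset.mul_sum]
      refine Finset.sum_congr rfl (fun i hi => ?_)
      rw [show (-1 : ℝ)^(i+1) * (N.choose i : ℝ) * vv β τ α 1 i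
          - (-1 : ℝ)^(i+1) * (N.choose i : ℝ) * vv β τ α t i
          = (-1 : ℝ)^(i+1) * (N.choose i : ℝ) * (vv β τ α 1 i - vv β τ α t i) from by ring]
      rw [hvdiff i hi]
      ring
    rw [hsum, key2 N hN w]
    have hDw : D (N-1) w 1 = D (N-1) what 0 := by
      rw [← D_shift (N-1) w 0]
      exact D_congr (N-1) (fun m => rfl) 0
    rw [hDw]
    have hCMwhat : 0 ≤ D (N-1) what 0 := by
      rw [hwhat]
      refine D_mul (N-1) _ _ (fun j _ n => D_rho_nonneg hβ hc j n) (fun j hj n => ?_) 0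
      exact D_mul j _ _ (fun j' _ n' => hCMr 1 zero_le_one le_rfl j' n')
        (fun j' _ n' => hCMr t ht0 ht1 j' n') n
    have hN0 : (0:ℝ) ≤ (N:ℝ) := Nat.cast_nonneg N
    exact mul_nonneg (by linarith) (mul_nonneg hN0 hCMwhat)
  refine ⟨fun t ht => ⟨hPu_nonneg t ht.1 ht.2, hmono t ht.1 ht.2⟩, ?_, ?_⟩
  · unfold Pu
    refine Finset.sum_congr rfl (fun i _ => ?_)
    rw [mul_one, mul_one]
  · unfold Pu
    simp
end

section
/- Let N ≥ 1 be an integer, α = (N!)^{−1/N}, let Z be a nonnegative real-valued random variable, and let g ∼ Gamma(N,1) be independent of Z. Then P(g > Z) ≤ E[ 1 − (1 − e^{−αZ})^N ] = ∑_{i=1}^N (−1)^{i+1}·binom(N,i)·E[e^{−iαZ}]. (This is inequality (a) in the proof of the paper's Theorem 2, combining Alzer's gamma bound with a random threshold to upper bound the successful transmission probability.) -/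
open MeasureTheory ProbabilityTheory Finset

section AlzerAuxSec
namespace AlzerAux
open Real Set Filter Topology MeasureTheory ProbabilityTheory
open scoped ENNReal

/-- the convexity core -/
noncomputable def c (u : ℝ) : ℝ := Real.log (1 - Real.exp (-u)) - Real.log u

lemma one_sub_exp_pos {u : ℝ} (hu : 0 < u) : 0 < 1 - Real.exp (-u) := by
  have : Real.exp (-u) < 1 := by rw [Real.exp_lt_one_iff]; linarith
  linarith

noncomputable def c1 (u : ℝ) : ℝ := Real.exp (-u) / (1 - Real.exp (-u)) - u⁻¹

noncomputable def c2 (u : ℝ) : ℝ := -Real.exp (-u) / (1 - Real.exp (-u))^2 + (u^2)⁻¹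

lemma hasDerivAt_c {u : ℝ} (hu : 0 < u) : HasDerivAt c (c1 u) u := by
  have h1 : HasDerivAt (fun y : ℝ => -y) (-1) u := (hasDerivAt_id u).neg
  have h2 := h1.exp
  have h3 := (h2.const_sub 1).log (one_sub_exp_pos hu).ne'
  have h4 := Real.hasDerivAt_log hu.ne'
  have := h3.sub h4
  convert this using 1
  · rfl
  · rfl
  · rfl
  unfold c1
  field_simp

lemma hasDerivAt_c1 {u : ℝ} (hu : 0 < u) : HasDerivAt c1 (c2 u) u := by
  have h1 : HasDerivAt (fun y : ℝ => -y) (-1) u := (hasDerivAt_id u).neg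
  have h2 := h1.exp
  have h3 := h2.const_sub 1
  have hd := h2.div h3 (one_sub_exp_pos hu).ne'
  have h5 := (hasDerivAt_inv hu.ne')
  have := hd.sub h5
  convert this using 1
  · rfl
  · rfl
  · rfl
  unfold c2
  have hne := (one_sub_exp_pos hu).ne'
  field_simp
  ring

lemma c2_nonneg {u : ℝ} (hu : 0 < u) : 0 ≤ c2 u := by
  set E := Real.exp (-u) with hE
  have hEpos : 0 < E := Real.exp_pos _
  have he1 : 0 < 1 - E := one_sub_exp_pos hu
  have hs : u / 2 ≤ Real.sinh (u / 2) := Real.self_le_sinh_iff.mpr (by linarith)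
  rw [Real.sinh_eq] at hs
  have hhalf : Real.exp (-(u/2)) ^ 2 = E := by
    rw [← Real.exp_nat_mul]; norm_num; congr 1; ring
  have hkey : u * Real.exp (-(u/2)) ≤ 1 - E := by
    have h2 : u ≤ Real.exp (u/2) - Real.exp (-(u/2)) := by linarith
    have h3 := mul_le_mul_of_nonneg_right h2 (Real.exp_pos (-(u/2))).le
    calc u * Real.exp (-(u/2)) ≤ (Real.exp (u/2) - Real.exp (-(u/2))) * Real.exp (-(u/2)) := h3
      _ = 1 - E := by
          rw [sub_mul, ← Real.exp_add, ← hhalf]; norm_num; ring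
  have hkey2 : u^2 * E ≤ (1 - E)^2 := by
    have h4 : (u * Real.exp (-(u/2)))^2 ≤ (1-E)^2 := by
      apply pow_le_pow_left₀ (by positivity) hkey
    calc u^2 * E = (u * Real.exp (-(u/2)))^2 := by rw [mul_pow, hhalf]
      _ ≤ (1-E)^2 := h4
  have hc2 : c2 u = ((1-E)^2 - u^2 * E) / ((1-E)^2 * u^2) := by
    unfold c2
    rw [← hE]
    field_simp
    ring
  rw [hc2]
  apply div_nonneg (by linarith) (by positivity)

lemma convexOn_c : ConvexOn ℝ (Ioi 0) c := by
  have hev : ∀ x ∈ Ioi (0:ℝ), deriv c =ᶠ[𝓝 x] c1 := by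
    intro x hx
    filter_upwards [isOpen_Ioi.mem_nhds hx] with y hy
    exact (hasDerivAt_c hy).deriv
  apply convexOn_of_deriv2_nonneg (convex_Ioi 0)
  · exact fun x hx => (hasDerivAt_c hx).continuousAt.continuousWithinAt
  · rw [interior_Ioi]
    exact fun x hx => (hasDerivAt_c hx).differentiableAt.differentiableWithinAt
  · rw [interior_Ioi]
    intro x hx
    exact (((hasDerivAt_c1 hx).differentiableAt.congr_of_eventuallyEq
      (hev x hx))).differentiableWithinAt
  · rw [interior_Ioi]
    intro x hx
    have : deriv^[2] c x = deriv (deriv c) x := rfl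
    rw [this, (hev x hx).deriv_eq, (hasDerivAt_c1 hx).deriv]
    exact c2_nonneg hx


lemma tendsto_c_zero : Tendsto c (𝓝[>] (0:ℝ)) (𝓝 0) := by
  have hneg : Tendsto (fun u : ℝ => -u) (𝓝[>] (0:ℝ)) (𝓝[≠] (0:ℝ)) := by
    apply Tendsto.mono_right _ (nhdsWithin_mono _ (fun x hx => ne_of_lt hx))
    apply tendsto_nhdsWithin_of_tendsto_nhds_of_eventually_within
    · have : Tendsto (fun u : ℝ => -u) (𝓝 (0:ℝ)) (𝓝 (-0)) := tendsto_neg _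
      rw [neg_zero] at this
      exact this.mono_left nhdsWithin_le_nhds
    · filter_upwards [self_mem_nhdsWithin] with x hx
      show -x < 0
      exact neg_lt_zero.mpr (mem_Ioi.mp hx)
  have hslope : Tendsto (slope Real.exp 0) (𝓝[≠] (0:ℝ)) (𝓝 1) := by
    have := Real.hasDerivAt_exp 0
    rw [hasDerivAt_iff_tendsto_slope] at this
    simpa using this
  have h1 : Tendsto (fun u : ℝ => (1 - Real.exp (-u)) / u) (𝓝[>] (0:ℝ)) (𝓝 1) := by
    have hc := hslope.comp hneg
    apply hc.congr'
    filter_upwards [self_mem_nhdsWithin] with u hu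
    have hu' : (0:ℝ) < u := hu
    simp only [Function.comp, slope_def_field]
    rw [Real.exp_zero]
    rw [div_eq_div_iff (by linarith) hu'.ne']
    ring
  have h2 : Tendsto (fun u : ℝ => Real.log ((1 - Real.exp (-u)) / u)) (𝓝[>] (0:ℝ)) (𝓝 0) := by
    have := (Real.continuousAt_log one_ne_zero).tendsto.comp h1
    simpa [Function.comp_def] using this
  apply h2.congr'
  filter_upwards [self_mem_nhdsWithin] with u hu
  have hu' : (0:ℝ) < u := hu
  rw [Real.log_div (one_sub_exp_pos hu').ne' hu'.ne']
  rfl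

lemma slope_c {s t : ℝ} (hs : 0 < s) (hst : s ≤ t) : t * c s ≤ s * c t := by
  rcases eq_or_lt_of_le hst with rfl | h
  · ring_nf; exact le_refl _
  · have ht : 0 < t := hs.trans h
    have key : ∀ ε ∈ Ioo (0:ℝ) s, c s ≤ (t-s)/(t-ε) * c ε + (s-ε)/(t-ε) * c t := by
      intro ε hε
      obtain ⟨hε0, hεs⟩ := hε
      have hεt : ε < t := hεs.trans h
      have hw1 : (0:ℝ) ≤ (t-s)/(t-ε) := by apply div_nonneg <;> linarith
      have hw2 : (0:ℝ) ≤ (s-ε)/(t-ε) := by apply div_nonneg <;> linarith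
      have hsum : (t-s)/(t-ε) + (s-ε)/(t-ε) = 1 := by
        rw [← add_div, show t - s + (s - ε) = t - ε by ring,
          div_self (by linarith : t - ε ≠ 0)]
      have := convexOn_c.2 (mem_Ioi.mpr hε0) (mem_Ioi.mpr ht) hw1 hw2 hsum
      simp only [smul_eq_mul] at this
      have harg : (t-s)/(t-ε) * ε + (s-ε)/(t-ε) * t = s := by
        rw [div_mul_eq_mul_div, div_mul_eq_mul_div, ← add_div,
          div_eq_iff (by linarith : t - ε ≠ 0)]
        ring
      rwa [harg] at this
    have hT : Tendsto (fun ε => (t-s)/(t-ε) * c ε + (s-ε)/(t-ε) * c t) (𝓝[>] (0:ℝ))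
        (𝓝 ((t-s)/t * 0 + s/t * c t)) := by
      apply Tendsto.add
      · apply Tendsto.mul _ tendsto_c_zero
        have : ContinuousAt (fun ε : ℝ => (t-s)/(t-ε)) 0 := by
          apply ContinuousAt.div continuousAt_const (by fun_prop)
          simpa using ht.ne'
        simpa using this.tendsto.mono_left nhdsWithin_le_nhds
      · apply Tendsto.mul_const
        have : ContinuousAt (fun ε : ℝ => (s-ε)/(t-ε)) 0 := by
          apply ContinuousAt.div (by fun_prop) (by fun_prop)
          simpa using ht.ne'
        simpa using this.tendsto.mono_left nhdsWithin_le_nhds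
    have hle : c s ≤ (t-s)/t * 0 + s/t * c t := by
      apply ge_of_tendsto hT
      filter_upwards [Ioo_mem_nhdsGT hs] with ε hε
      exact key ε hε
    rw [mul_zero, zero_add] at hle
    calc t * c s ≤ t * (s/t * c t) := by
          apply mul_le_mul_of_nonneg_left hle ht.le
      _ = s * c t := by field_simp

noncomputable def phi (α : ℝ) (N : ℕ) (x : ℝ) : ℝ :=
  -((N - 1 : ℕ) : ℝ) * c (α * x) - (1 - α) * x

lemma phi_nonneg_mono {α : ℝ} {N : ℕ} (hα : 0 < α) {a b : ℝ} (ha : 0 < a) (hab : a ≤ b)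
    (hb : 0 ≤ phi α N b) : 0 ≤ phi α N a := by
  set n : ℝ := ((N - 1 : ℕ) : ℝ) with hn
  have hn0 : 0 ≤ n := Nat.cast_nonneg _
  have hb0 : 0 < b := lt_of_lt_of_le ha hab
  have h1 := slope_c (mul_pos hα ha) (by nlinarith : α * a ≤ α * b)
  have h1' : b * c (α * a) ≤ a * c (α * b) := by
    have h2 : α * (b * c (α * a)) ≤ α * (a * c (α * b)) := by ring_nf; ring_nf at h1; linarith
    exact le_of_mul_le_mul_left h2 hα
  unfold phi at hb ⊢
  rw [← hn] at hb ⊢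
  have h3 := mul_le_mul_of_nonneg_left h1' hn0
  have h4 := mul_le_mul_of_nonneg_left hb ha.le
  have h5 : 0 ≤ b * (-n * c (α * a) - (1 - α) * a) := by nlinarith
  nlinarith

noncomputable def Gd (α : ℝ) (N : ℕ) (x : ℝ) : ℝ :=
  N * α * Real.exp (-(α * x)) * (1 - Real.exp (-(α * x))) ^ (N - 1)

noncomputable def fR (N : ℕ) (x : ℝ) : ℝ :=
  x ^ (N - 1) * Real.exp (-x) / ((N - 1).factorial : ℝ)

lemma compare {α : ℝ} {N : ℕ} (hN : 1 ≤ N) (hα : 0 < α)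
    (hfact : α ^ N * (N.factorial : ℝ) = 1) {x : ℝ} (hx : 0 < x) :
    (0 ≤ phi α N x → Gd α N x ≤ fR N x) ∧ (phi α N x ≤ 0 → fR N x ≤ Gd α N x) := by
  set E := Real.exp (-(α * x)) with hE
  set X := Real.exp x with hX
  have hEpos : 0 < E := Real.exp_pos _
  have hXpos : 0 < X := Real.exp_pos _
  have he1 : 0 < 1 - E := one_sub_exp_pos (mul_pos hα hx)
  have haxpos : 0 < α * x := mul_pos hα hx
  -- key rewriting of phi
  have hphi : phi α N x = ((N-1:ℕ) : ℝ) * Real.log ((α*x) / (1-E)) - (1-α) * x := by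
    unfold phi c
    rw [Real.log_div haxpos.ne' he1.ne']
    ring
  have hlog : ((N-1:ℕ) : ℝ) * Real.log ((α*x) / (1-E)) = Real.log (((α*x)/(1-E))^(N-1)) := by
    rw [Real.log_pow]
  have hXE : X * E = Real.exp ((1-α) * x) := by
    rw [hX, hE, ← Real.exp_add]; congr 1; ring
  have hGpos : (0:ℝ) < ((α*x)/(1-E))^(N-1) := by positivity
  have hiff : 0 ≤ phi α N x ↔ X * E * (1-E)^(N-1) ≤ (α*x)^(N-1) := by
    rw [hphi, sub_nonneg, hlog, Real.le_log_iff_exp_le hGpos, ← hXE, div_pow,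
      le_div_iff₀ (by positivity : (0:ℝ) < (1-E)^(N-1))]
  have hiff2 : phi α N x ≤ 0 ↔ (α*x)^(N-1) ≤ X * E * (1-E)^(N-1) := by
    rw [hphi, sub_nonpos, hlog, Real.log_le_iff_le_exp hGpos, ← hXE, div_pow,
      div_le_iff₀ (by positivity : (0:ℝ) < (1-E)^(N-1))]
  -- identities
  have hXne : X ≠ 0 := hXpos.ne'
  have hfacne : ((N-1).factorial : ℝ) ≠ 0 := by positivity
  have hfac : (N.factorial : ℝ) = (N : ℝ) * ((N-1).factorial : ℝ) := by
    rw_mod_cast [Nat.mul_factorial_pred (by omega)]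
  have hpow : α * α^(N-1) = α^N := by
    rw [← pow_succ']
    congr 1
    omega
  have hexpneg : Real.exp (-x) = X⁻¹ := by rw [hX, Real.exp_neg]
  have hid1 : fR N x = ((N:ℝ) * α / X) * (α*x)^(N-1) := by
    rw [fR, mul_pow, hexpneg]
    rw [div_eq_iff hfacne]
    have : ((N:ℝ) * α / X) * (α^(N-1) * x^(N-1)) * ((N-1).factorial : ℝ)
        = x^(N-1) * X⁻¹ * ((N:ℝ) * ((N-1).factorial : ℝ) * (α * α^(N-1))) := by
      field_simp
    rw [this, hpow, ← hfac]
    have : (N.factorial : ℝ) * α^N = 1 := by linarith [hfact]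
    rw [show (N.factorial : ℝ) * α^N = α^N * (N.factorial:ℝ) by ring, hfact]
    ring
  have hid2 : Gd α N x = ((N:ℝ) * α / X) * (X * E * (1-E)^(N-1)) := by
    rw [Gd, ← hE]
    field_simp
  have hcoef : (0:ℝ) ≤ (N:ℝ) * α / X := by positivity
  constructor
  · intro h
    rw [hid1, hid2]
    exact mul_le_mul_of_nonneg_left (hiff.mp h) hcoef
  · intro h
    rw [hid1, hid2]
    exact mul_le_mul_of_nonneg_left (hiff2.mp h) hcoef

lemma hasDerivAt_G (α : ℝ) {N : ℕ} (hN : 1 ≤ N) (x : ℝ) :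
    HasDerivAt (fun y => (1 - Real.exp (-(α * y))) ^ N) (Gd α N x) x := by
  have h1 : HasDerivAt (fun y : ℝ => -(α * y)) (-α) x := by
    exact ((hasDerivAt_id x).const_mul α).neg.congr_deriv (by simp)
  have h2 := h1.exp
  have h3 := h2.const_sub 1
  have h4 := h3.pow N
  convert h4 using 1
  · rfl
  · rfl
  · rfl
  rw [Gd]
  ring

lemma continuous_Gd (α : ℝ) (N : ℕ) : Continuous (Gd α N) := by
  unfold Gd; fun_prop

lemma integral_Gd_Ioc {α : ℝ} {N : ℕ} (hN : 1 ≤ N) {z : ℝ} (hz : 0 ≤ z) :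
    ∫ x in Ioc 0 z, Gd α N x = (1 - Real.exp (-(α * z))) ^ N := by
  rw [← intervalIntegral.integral_of_le hz]
  rw [intervalIntegral.integral_eq_sub_of_hasDerivAt
    (fun x _ => hasDerivAt_G α hN x) ((continuous_Gd α N).intervalIntegrable 0 z)]
  simp [zero_pow (by omega : N ≠ 0)]

lemma tendsto_G_atTop {α : ℝ} (hα : 0 < α) (N : ℕ) :
    Tendsto (fun x => (1 - Real.exp (-(α * x))) ^ N) atTop (𝓝 1) := by
  have h1 : Tendsto (fun x : ℝ => -(α * x)) atTop atBot := by
    apply Filter.tendsto_neg_atBot_iff.mpr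
    exact Tendsto.const_mul_atTop hα tendsto_id
  have h2 : Tendsto (fun x : ℝ => Real.exp (-(α * x))) atTop (𝓝 0) :=
    Real.tendsto_exp_atBot.comp h1
  have h3 : Tendsto (fun x : ℝ => 1 - Real.exp (-(α * x))) atTop (𝓝 1) := by
    simpa using (tendsto_const_nhds (x := (1:ℝ))).sub h2
  simpa using h3.pow N

lemma Gd_nonneg {α : ℝ} {N : ℕ} (hα : 0 < α) {x : ℝ} (hx : 0 ≤ x) : 0 ≤ Gd α N x := by
  have : Real.exp (-(α * x)) ≤ 1 := by
    rw [Real.exp_le_one_iff]; nlinarith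
  unfold Gd
  have h1 : (0:ℝ) ≤ 1 - Real.exp (-(α * x)) := by linarith
  positivity

lemma integrableOn_Gd_Ioi {α : ℝ} {N : ℕ} (hN : 1 ≤ N) (hα : 0 < α) {z : ℝ} (hz : 0 ≤ z) :
    IntegrableOn (Gd α N) (Ioi z) := by
  apply integrableOn_Ioi_deriv_of_nonneg' (g := fun y => (1 - Real.exp (-(α * y))) ^ N)
    (fun x _ => hasDerivAt_G α hN x) (fun x hx => Gd_nonneg hα (le_trans hz (le_of_lt hx)))
    (tendsto_G_atTop hα N)

lemma integral_Gd_Ioi {α : ℝ} {N : ℕ} (hN : 1 ≤ N) (hα : 0 < α) {z : ℝ} (hz : 0 ≤ z) :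
    ∫ x in Ioi z, Gd α N x = 1 - (1 - Real.exp (-(α * z))) ^ N := by
  rw [integral_Ioi_of_hasDerivAt_of_nonneg' (fun x _ => hasDerivAt_G α hN x)
    (fun x hx => Gd_nonneg hα (le_trans hz (le_of_lt hx))) (tendsto_G_atTop hα N)]

lemma pdf_eq {N : ℕ} (hN : 1 ≤ N) {x : ℝ} (hx : 0 < x) :
    gammaPDFReal (N : ℝ) 1 x = fR N x := by
  rw [gammaPDFReal, if_pos hx.le, fR]
  have h1 : Real.Gamma (N : ℝ) = ((N - 1).factorial : ℝ) := by
    rw [show (N : ℝ) = ((N - 1 : ℕ) : ℝ) + 1 by rw [Nat.cast_sub hN]; push_cast; ring]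
    exact Real.Gamma_nat_eq_factorial _
  have h2 : x ^ ((N : ℝ) - 1) = x ^ (N - 1 : ℕ) := by
    rw [← Real.rpow_natCast x (N - 1), Nat.cast_sub hN]
    norm_num
  rw [h1, h2, Real.one_rpow, one_mul]
  ring

lemma continuous_fR (N : ℕ) : Continuous (fR N) := by
  unfold fR; fun_prop

lemma fR_nonneg {N : ℕ} {x : ℝ} (hx : 0 ≤ x) : 0 ≤ fR N x := by
  unfold fR; positivity

lemma alpha_pos {N : ℕ} (hN : 1 ≤ N) {α : ℝ}
    (hα : α = (N.factorial : ℝ) ^ (-(1 : ℝ) / (N : ℝ))) : 0 < α := by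
  rw [hα]
  positivity

lemma alpha_fact {N : ℕ} (hN : 1 ≤ N) {α : ℝ}
    (hα : α = (N.factorial : ℝ) ^ (-(1 : ℝ) / (N : ℝ))) :
    α ^ N * (N.factorial : ℝ) = 1 := by
  have hf : (0:ℝ) < (N.factorial : ℝ) := by positivity
  rw [hα, ← Real.rpow_natCast ((N.factorial : ℝ) ^ (-(1 : ℝ) / (N : ℝ))) N,
    ← Real.rpow_mul hf.le]
  have hNne : (N : ℝ) ≠ 0 := by positivity
  rw [show (-(1:ℝ) / (N:ℝ)) * (N:ℕ) = -1 by field_simp]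
  rw [Real.rpow_neg_one]
  field_simp

theorem gamma_tail_le {N : ℕ} (hN : 1 ≤ N) {α : ℝ}
    (hα : α = (N.factorial : ℝ) ^ (-(1 : ℝ) / (N : ℝ))) {z : ℝ} (hz : 0 ≤ z) :
    gammaMeasure (N : ℝ) 1 (Ioi z) ≤
      ENNReal.ofReal (1 - (1 - Real.exp (-(α * z))) ^ N) := by
  have hα0 : 0 < α := alpha_pos hN hα
  have hαN : α ^ N * (N.factorial : ℝ) = 1 := alpha_fact hN hα
  have hNpos : (0:ℝ) < (N : ℝ) := by positivity
  have hprob : IsProbabilityMeasure (gammaMeasure (N : ℝ) 1) :=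
    isProbabilityMeasure_gammaMeasure hNpos one_pos
  have hE1 : Real.exp (-(α * z)) ≤ 1 := by rw [Real.exp_le_one_iff]; nlinarith
  have hpowle : (1 - Real.exp (-(α * z))) ^ N ≤ 1 :=
    pow_le_one₀ (by linarith) (by nlinarith [Real.exp_pos (-(α * z))])
  rcases hz.eq_or_lt with rfl | hz0
  · simp only [mul_zero, neg_zero, Real.exp_zero, sub_self, zero_pow (by omega : N ≠ 0),
      sub_zero, ENNReal.ofReal_one]
    exact prob_le_one
  by_cases hphi : 0 ≤ phi α N z
  -- Case A : pdf ≥ Gd on (0, z]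
  · have hcmp : ∀ x ∈ Ioc 0 z, Gd α N x ≤ fR N x := fun x hx =>
      (compare hN hα0 hαN hx.1).1 (phi_nonneg_mono hα0 hx.1 hx.2 hphi)
    have hIoc : gammaMeasure (N : ℝ) 1 (Ioc 0 z) =
        ENNReal.ofReal (∫ x in Ioc 0 z, fR N x) := by
      rw [gammaMeasure, withDensity_apply _ measurableSet_Ioc]
      rw [setLIntegral_congr_fun measurableSet_Ioc
        (fun x hx => by rw [gammaPDF, pdf_eq hN hx.1])]
      rw [← ofReal_integral_eq_lintegral_ofReal
        ((continuous_fR N).integrableOn_Ioc)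
        ((ae_restrict_iff' measurableSet_Ioc).mpr
          (ae_of_all _ (fun x hx => fR_nonneg hx.1.le)))]
    have hineq : ∫ x in Ioc 0 z, Gd α N x ≤ ∫ x in Ioc 0 z, fR N x :=
      setIntegral_mono_on ((continuous_Gd α N).integrableOn_Ioc)
        ((continuous_fR N).integrableOn_Ioc) measurableSet_Ioc hcmp
    have h1 : gammaMeasure (N : ℝ) 1 (Ioi z) = 1 - gammaMeasure (N : ℝ) 1 (Iic z) := by
      rw [← compl_Iic, measure_compl measurableSet_Iic (measure_ne_top _ _), measure_univ]
    rw [h1]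
    calc (1 : ℝ≥0∞) - gammaMeasure (N : ℝ) 1 (Iic z)
        ≤ 1 - gammaMeasure (N : ℝ) 1 (Ioc 0 z) :=
          tsub_le_tsub_left (measure_mono Set.Ioc_subset_Iic_self) 1
      _ ≤ 1 - ENNReal.ofReal ((1 - Real.exp (-(α * z))) ^ N) := by
          rw [hIoc, ← integral_Gd_Ioc hN hz]
          exact tsub_le_tsub_left (ENNReal.ofReal_le_ofReal hineq) 1
      _ = ENNReal.ofReal (1 - (1 - Real.exp (-(α * z))) ^ N) := by
          rw [← ENNReal.ofReal_one, ← ENNReal.ofReal_sub _ (pow_nonneg (by linarith : (0:ℝ) ≤ 1 - Real.exp (-(α * z))) N)]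
  -- Case B : pdf ≤ Gd on (z, ∞)
  · have hphi' : phi α N z ≤ 0 := le_of_not_ge hphi
    have hcmp : ∀ x ∈ Ioi z, fR N x ≤ Gd α N x := by
      intro x hx
      have hxz : z < x := hx
      have hphix : phi α N x ≤ 0 := by
        by_contra hc
        push_neg at hc
        exact hphi (phi_nonneg_mono hα0 hz0 hxz.le hc.le)
      exact (compare hN hα0 hαN (hz0.trans hxz)).2 hphix
    have hGint := integrableOn_Gd_Ioi hN hα0 hz
    have hfint : IntegrableOn (fR N) (Ioi z) := by
      apply Integrable.mono' hGint ((continuous_fR N).aestronglyMeasurable.restrict)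
      refine (ae_restrict_iff' measurableSet_Ioi).mpr (ae_of_all _ (fun x hx => ?_))
      rw [Real.norm_of_nonneg (fR_nonneg (hz0.trans hx).le)]
      exact hcmp x hx
    have hIoi : gammaMeasure (N : ℝ) 1 (Ioi z) =
        ENNReal.ofReal (∫ x in Ioi z, fR N x) := by
      rw [gammaMeasure, withDensity_apply _ measurableSet_Ioi]
      rw [setLIntegral_congr_fun measurableSet_Ioi
        (fun x hx => by rw [gammaPDF, pdf_eq hN (hz0.trans hx)])]
      rw [← ofReal_integral_eq_lintegral_ofReal hfint
        ((ae_restrict_iff' measurableSet_Ioi).mpr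
          (ae_of_all _ (fun x hx => fR_nonneg (hz0.trans hx).le)))]
    rw [hIoi, ← integral_Gd_Ioi hN hα0 hz]
    exact ENNReal.ofReal_le_ofReal
      (setIntegral_mono_on hfint hGint measurableSet_Ioi hcmp)

end AlzerAux
end AlzerAuxSec

section MainSec
open scoped ENNReal
namespace AlzerAux
lemma binom_identity (N : ℕ) (hN : 1 ≤ N) (t : ℝ) :
    1 - (1 - t) ^ N = ∑ i ∈ Finset.Icc 1 N, (-1 : ℝ) ^ (i + 1) * (N.choose i : ℝ) * t ^ i := by
  have hrange : Finset.range (N + 1) = insert 0 (Finset.Icc 1 N) := by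
    ext i; simp [Finset.mem_range, Finset.mem_Icc]; omega
  have hpow : (1 - t) ^ N = (-t + 1) ^ N := by ring_nf
  rw [hpow, add_pow, hrange, Finset.sum_insert (by simp)]
  simp only [pow_zero, one_mul, Nat.choose_zero_right, Nat.cast_one, mul_one, one_pow]
  rw [show (1:ℝ) - (1 + ∑ i ∈ Finset.Icc 1 N, (-t) ^ i * (N.choose i : ℝ))
      = ∑ i ∈ Finset.Icc 1 N, -((-t) ^ i * (N.choose i : ℝ)) by
    rw [Finset.sum_neg_distrib]; ring]
  apply Finset.sum_congr rfl
  intro i _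
  rw [neg_pow]
  ring
end AlzerAux

/-- Inequality (a) in the proof of the paper's Theorem 2: for `g ∼ Gamma(N,1)` independent of a
nonnegative random variable `Z`, with `α = (N!)^{−1/N}`,
`P(g > Z) ≤ E[1 − (1 − e^{−αZ})^N] = ∑_{i=1}^N (−1)^{i+1}·binom(N,i)·E[e^{−iαZ}]`. -/
theorem prob_gamma_gt_le_alzer_bound
    {Ω : Type*} [MeasurableSpace Ω] (μ : Measure Ω) [IsProbabilityMeasure μ]
    (N : ℕ) (hN : 1 ≤ N) (α : ℝ) (hα : α = (N.factorial : ℝ) ^ (-(1 : ℝ) / (N : ℝ)))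
    (Z : Ω → ℝ) (hZm : Measurable Z) (hZ0 : ∀ ω, 0 ≤ Z ω)
    (g : Ω → ℝ) (hgm : Measurable g)
    (hlaw : Measure.map g μ = gammaMeasure (N : ℝ) 1)
    (hindep : IndepFun g Z μ) :
    μ {ω | Z ω < g ω} ≤
      ENNReal.ofReal (∫ ω, (1 - (1 - Real.exp (-(α * Z ω))) ^ N) ∂μ) ∧
    ∫ ω, (1 - (1 - Real.exp (-(α * Z ω))) ^ N) ∂μ =
      ∑ i ∈ Finset.Icc 1 N,
        (-1 : ℝ) ^ (i + 1) * (N.choose i : ℝ) * ∫ ω, Real.exp (-((i : ℝ) * α * Z ω)) ∂μ := by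
  have hα0 : 0 < α := by rw [hα]; positivity
  -- basic bounds on the integrand
  have hEle : ∀ ω, Real.exp (-(α * Z ω)) ≤ 1 := fun ω => by
    rw [Real.exp_le_one_iff]
    have := hZ0 ω
    nlinarith
  have hh01 : ∀ ω, 0 ≤ 1 - (1 - Real.exp (-(α * Z ω))) ^ N ∧
      1 - (1 - Real.exp (-(α * Z ω))) ^ N ≤ 1 := by
    intro ω
    have h1 := hEle ω
    have h2 := (Real.exp_pos (-(α * Z ω))).le
    constructor
    · have : (1 - Real.exp (-(α * Z ω))) ^ N ≤ 1 := pow_le_one₀ (by linarith) (by linarith)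
      linarith
    · have : 0 ≤ (1 - Real.exp (-(α * Z ω))) ^ N := pow_nonneg (by linarith) N
      linarith
  have hmeash : Measurable fun z : ℝ => 1 - (1 - Real.exp (-(α * z))) ^ N := by fun_prop
  have hint : Integrable (fun ω => 1 - (1 - Real.exp (-(α * Z ω))) ^ N) μ := by
    apply Integrable.mono' (integrable_const (1:ℝ)) (hmeash.comp hZm).aestronglyMeasurable
    filter_upwards with ω
    simp only [Function.comp_apply]
    rw [Real.norm_of_nonneg (hh01 ω).1]
    exact (hh01 ω).2
  constructor
  · -- the inequality
    have hmap : μ.map (fun ω => (Z ω, g ω)) = (μ.map Z).prod (μ.map g) :=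
      (indepFun_iff_map_prod_eq_prod_map_map hZm.aemeasurable hgm.aemeasurable).mp hindep.symm
    have hs : MeasurableSet {p : ℝ × ℝ | p.1 < p.2} := measurableSet_lt measurable_fst measurable_snd
    have h1 : μ {ω | Z ω < g ω} = ((μ.map Z).prod (μ.map g)) {p : ℝ × ℝ | p.1 < p.2} := by
      rw [← hmap, Measure.map_apply (hZm.prodMk hgm) hs]
      rfl
    have hprob : IsProbabilityMeasure (gammaMeasure (N:ℝ) 1) :=
      isProbabilityMeasure_gammaMeasure (by positivity) one_pos
    have hsf : SFinite (μ.map g) := by rw [hlaw]; infer_instance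
    have h2 : ((μ.map Z).prod (μ.map g)) {p : ℝ × ℝ | p.1 < p.2}
        = ∫⁻ z, gammaMeasure (N : ℝ) 1 (Set.Ioi z) ∂(μ.map Z) := by
      rw [Measure.prod_apply hs]
      simp only [← hlaw]
      rfl
    have hae : ∀ᵐ z ∂(μ.map Z), 0 ≤ z := by
      rw [ae_map_iff hZm.aemeasurable (measurableSet_Ici : MeasurableSet (Set.Ici (0:ℝ)))]
      exact Filter.Eventually.of_forall hZ0
    have h3 : ∫⁻ z, gammaMeasure (N : ℝ) 1 (Set.Ioi z) ∂(μ.map Z)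
        ≤ ∫⁻ z, ENNReal.ofReal (1 - (1 - Real.exp (-(α * z))) ^ N) ∂(μ.map Z) := by
      apply lintegral_mono_ae
      filter_upwards [hae] with z hz
      exact AlzerAux.gamma_tail_le hN hα hz
    have h4 : ∫⁻ z, ENNReal.ofReal (1 - (1 - Real.exp (-(α * z))) ^ N) ∂(μ.map Z)
        = ∫⁻ ω, ENNReal.ofReal (1 - (1 - Real.exp (-(α * Z ω))) ^ N) ∂μ :=
      lintegral_map hmeash.ennreal_ofReal hZm
    have h5 : ∫⁻ ω, ENNReal.ofReal (1 - (1 - Real.exp (-(α * Z ω))) ^ N) ∂μ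
        = ENNReal.ofReal (∫ ω, (1 - (1 - Real.exp (-(α * Z ω))) ^ N) ∂μ) :=
      (ofReal_integral_eq_lintegral_ofReal hint
        (Filter.Eventually.of_forall fun ω => (hh01 ω).1)).symm
    rw [h1, h2, ← h5, ← h4]
    exact h3
  · -- the binomial expansion
    have hptwise : ∀ ω, 1 - (1 - Real.exp (-(α * Z ω))) ^ N =
        ∑ i ∈ Finset.Icc 1 N,
          (-1 : ℝ) ^ (i + 1) * (N.choose i : ℝ) * Real.exp (-((i : ℝ) * α * Z ω)) := by
      intro ω
      rw [AlzerAux.binom_identity N hN (Real.exp (-(α * Z ω)))]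
      apply Finset.sum_congr rfl
      intro i _
      congr 1
      rw [← Real.exp_nat_mul]
      congr 1
      ring
    have hinti : ∀ i ∈ Finset.Icc 1 N, Integrable
        (fun ω => (-1 : ℝ) ^ (i + 1) * (N.choose i : ℝ) * Real.exp (-((i : ℝ) * α * Z ω))) μ := by
      intro i _
      apply Integrable.const_mul
      apply Integrable.mono' (integrable_const (1:ℝ))
        (((Real.measurable_exp.comp ((measurable_const.mul hZm).neg))).aestronglyMeasurable)
      filter_upwards with ω
      simp only [Function.comp_apply, Pi.neg_apply, Pi.mul_apply]
      rw [Real.norm_of_nonneg (Real.exp_pos _).le, Real.exp_le_one_iff]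
      have h1 := hZ0 ω
      have h2 : (0:ℝ) ≤ (i:ℝ) := Nat.cast_nonneg _
      nlinarith [mul_nonneg (mul_nonneg h2 hα0.le) h1]
    calc ∫ ω, (1 - (1 - Real.exp (-(α * Z ω))) ^ N) ∂μ
        = ∫ ω, (∑ i ∈ Finset.Icc 1 N,
            (-1 : ℝ) ^ (i + 1) * (N.choose i : ℝ) * Real.exp (-((i : ℝ) * α * Z ω))) ∂μ := by
          apply integral_congr_ae
          filter_upwards with ω
          exact hptwise ω
      _ = ∑ i ∈ Finset.Icc 1 N,
            ∫ ω, (-1 : ℝ) ^ (i + 1) * (N.choose i : ℝ) * Real.exp (-((i : ℝ) * α * Z ω)) ∂μ :=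
          integral_finset_sum _ hinti
      _ = ∑ i ∈ Finset.Icc 1 N,
            (-1 : ℝ) ^ (i + 1) * (N.choose i : ℝ) * ∫ ω, Real.exp (-((i : ℝ) * α * Z ω)) ∂μ := by
          apply Finset.sum_congr rfl
          intro i _
          rw [integral_const_mul]

end MainSec
end
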